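/- arXiv:1408.5402 — 5 statements merged into one kernel-verified Lean document; each statement's English description precedes it below -/
import Mathlib

section
/- For every integer n ≥ 1 and every w ∈ ℂ with |w| < 1, the map φ_n(w;·) sends the unit circle S¹ into itself, satisfies φ_n(w; z)^n = (z^n + conj(w))/(1 + w·z^n) for every z ∈ S¹, and satisfies φ_n(−w; φ_n(w; z)) = z for every z ∈ S¹; in particular φ_n(w;·) is a bijection of S¹ onto itself with inverse φ_n(−w;·). -/
open Complex

/-- `φ_n(w; z) = z · exp((1/n) · (Log(1 + conj(w)·z^{−n}) − Log(1 + w·z^{n})))`,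
where `Log` is the principal branch of the complex logarithm. -/
noncomputable def phiMap (n : ℕ) (w : ℂ) (z : ℂ) : ℂ :=
  z * Complex.exp (((n : ℂ))⁻¹ *
    (Complex.log (1 + (starRingEnd ℂ) w * (z⁻¹) ^ n) - Complex.log (1 + w * z ^ n)))

lemma re_pos_aux (n : ℕ) {w z : ℂ} (hw : ‖w‖ < 1) (hz : ‖z‖ = 1) :
    0 < (1 + w * z ^ n).re := by
  have h1 : ‖w * z ^ n‖ < 1 := by
    simp [map_mul, map_pow, hz, hw]
  have h2 : |(w * z ^ n).re| ≤ ‖w * z ^ n‖ := Complex.abs_re_le_norm _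
  have h3 : -(1:ℝ) < (w * z ^ n).re := by
    have := abs_lt.mp (lt_of_le_of_lt h2 h1)
    linarith [this.1]
  simp only [Complex.add_re, Complex.one_re]
  linarith

lemma arg_ne_pi_aux (n : ℕ) {w z : ℂ} (hw : ‖w‖ < 1) (hz : ‖z‖ = 1) :
    (1 + w * z ^ n).arg ≠ Real.pi := by
  intro h
  have := (Complex.arg_eq_pi_iff.mp h).1
  linarith [re_pos_aux n hw hz]

lemma ne_zero_aux (n : ℕ) {w z : ℂ} (hw : ‖w‖ < 1) (hz : ‖z‖ = 1) :
    (1 + w * z ^ n) ≠ 0 := by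
  intro h
  have := re_pos_aux n hw hz
  rw [h] at this
  simp at this

lemma conj_form_aux (n : ℕ) {w z : ℂ} (hz : ‖z‖ = 1) :
    1 + (starRingEnd ℂ) w * (z⁻¹) ^ n = (starRingEnd ℂ) (1 + w * z ^ n) := by
  have hz1 : (starRingEnd ℂ) z * z = 1 := by
    rw [mul_comm, Complex.mul_conj, Complex.normSq_eq_norm_sq, hz]; norm_num
  have hzinv : z⁻¹ = (starRingEnd ℂ) z := (eq_inv_of_mul_eq_one_left hz1).symm
  rw [hzinv, map_add, map_one, map_mul, map_pow]

lemma phi_eq_aux (n : ℕ) {w z : ℂ} (hw : ‖w‖ < 1) (hz : ‖z‖ = 1) :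
    phiMap n w z = z * Complex.exp (((-2 * (1 + w * z ^ n).arg / n : ℝ) : ℂ) * I) := by
  unfold phiMap
  rw [conj_form_aux n hz, Complex.log_conj _ (arg_ne_pi_aux n hw hz)]
  congr 1
  have hsub : (starRingEnd ℂ) (Complex.log (1 + w * z ^ n)) - Complex.log (1 + w * z ^ n)
      = -(((2 * (Complex.log (1 + w * z ^ n)).im : ℝ) : ℂ) * I) := by
    rw [← Complex.sub_conj]; ring
  rw [hsub, Complex.log_im]
  push_cast
  ring

lemma phi_abs_aux (n : ℕ) {w z : ℂ} (hw : ‖w‖ < 1) (hz : ‖z‖ = 1) :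
    ‖phiMap n w z‖ = 1 := by
  rw [phi_eq_aux n hw hz, norm_mul, hz, Complex.norm_exp_ofReal_mul_I, mul_one]

lemma phi_pow_aux (n : ℕ) (hn : 1 ≤ n) {w z : ℂ} (hw : ‖w‖ < 1)
    (hz : ‖z‖ = 1) :
    (phiMap n w z) ^ n = (z ^ n + (starRingEnd ℂ) w) / (1 + w * z ^ n) := by
  have hb : (1 + w * z ^ n) ≠ 0 := ne_zero_aux n hw hz
  have hnC : (n : ℂ) ≠ 0 := Nat.cast_ne_zero.mpr (by omega)
  unfold phiMap
  rw [conj_form_aux n hz, mul_pow, ← Complex.exp_nat_mul]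
  rw [show (n : ℂ) * ((n : ℂ)⁻¹ * (Complex.log ((starRingEnd ℂ) (1 + w * z ^ n))
      - Complex.log (1 + w * z ^ n))) = Complex.log ((starRingEnd ℂ) (1 + w * z ^ n))
      - Complex.log (1 + w * z ^ n) by field_simp]
  rw [Complex.exp_sub,
    Complex.exp_log (by simpa only [ne_eq, map_eq_zero] using hb), Complex.exp_log hb]
  have hzz : z ^ n * ((starRingEnd ℂ) z) ^ n = 1 := by
    rw [← mul_pow, Complex.mul_conj, Complex.normSq_eq_norm_sq, hz]; norm_num
  rw [map_add, map_one, map_mul, map_pow, ← mul_div_assoc]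
  congr 1
  calc z ^ n * (1 + (starRingEnd ℂ) w * ((starRingEnd ℂ) z) ^ n)
      = z ^ n + (starRingEnd ℂ) w * (z ^ n * ((starRingEnd ℂ) z) ^ n) := by ring
    _ = z ^ n + (starRingEnd ℂ) w := by rw [hzz, mul_one]

lemma phi_inv_aux (n : ℕ) (hn : 1 ≤ n) {w z : ℂ} (hw : ‖w‖ < 1)
    (hz : ‖z‖ = 1) :
    phiMap n (-w) (phiMap n w z) = z := by
  have hwn : ‖-w‖ < 1 := by simpa using hw
  have hζ : ‖phiMap n w z‖ = 1 := phi_abs_aux n hw hz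
  have hb : (1 + w * z ^ n) ≠ 0 := ne_zero_aux n hw hz
  have hζn : (phiMap n w z) ^ n = (z ^ n + (starRingEnd ℂ) w) / (1 + w * z ^ n) :=
    phi_pow_aux n hn hw hz
  have ht : (0:ℝ) < 1 - Complex.normSq w := by
    have : Complex.normSq w < 1 := by
      rw [Complex.normSq_eq_norm_sq]; nlinarith [norm_nonneg w]
    linarith
  have hwc : w * (starRingEnd ℂ) w = ((Complex.normSq w : ℝ) : ℂ) := Complex.mul_conj w
  have hkey : 1 + (-w) * (phiMap n w z) ^ n
      = ((1 - Complex.normSq w : ℝ) : ℂ) * (1 + w * z ^ n)⁻¹ := by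
    rw [hζn, eq_mul_inv_iff_mul_eq₀ hb]
    field_simp
    push_cast
    linear_combination -hwc
  have harg : (1 + (-w) * (phiMap n w z) ^ n).arg = -(1 + w * z ^ n).arg := by
    rw [hkey, Complex.arg_real_mul _ ht, Complex.arg_inv,
      if_neg (arg_ne_pi_aux n hw hz)]
  rw [phi_eq_aux n hwn hζ, harg]
  nth_rewrite 1 [phi_eq_aux n hw hz]
  rw [mul_assoc, ← Complex.exp_add,
    show ((-2 * (1 + w * z ^ n).arg / n : ℝ) : ℂ) * I
      + ((-2 * -(1 + w * z ^ n).arg / n : ℝ) : ℂ) * I = 0 by push_cast; ring,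
    Complex.exp_zero, mul_one]

/-- For every integer `n ≥ 1` and `|w| < 1`, the map `φ_n(w;·)` sends the unit circle into
itself, satisfies `φ_n(w; z)^n = (z^n + conj w)/(1 + w z^n)` on the circle, satisfies
`φ_n(−w; φ_n(w; z)) = z` on the circle, and is a bijection of the circle onto itself
with inverse `φ_n(−w;·)`. -/
theorem phiMap_circle_properties (n : ℕ) (hn : 1 ≤ n) (w : ℂ) (hw : ‖w‖ < 1) :
    (∀ z : ℂ, ‖z‖ = 1 → ‖phiMap n w z‖ = 1) ∧
    (∀ z : ℂ, ‖z‖ = 1 →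
      (phiMap n w z) ^ n = (z ^ n + (starRingEnd ℂ) w) / (1 + w * z ^ n)) ∧
    (∀ z : ℂ, ‖z‖ = 1 → phiMap n (-w) (phiMap n w z) = z) ∧
    (∀ z : ℂ, ‖z‖ = 1 → phiMap n w (phiMap n (-w) z) = z) ∧
    Set.BijOn (phiMap n w) (Metric.sphere (0 : ℂ) 1) (Metric.sphere (0 : ℂ) 1) := by
  have hwn : ‖-w‖ < 1 := by simpa using hw
  have h4 : ∀ z : ℂ, ‖z‖ = 1 → phiMap n w (phiMap n (-w) z) = z := by
    intro z hz
    have := phi_inv_aux n hn hwn hz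
    simpa using this
  refine ⟨fun z hz => phi_abs_aux n hw hz, fun z hz => phi_pow_aux n hn hw hz,
    fun z hz => phi_inv_aux n hn hw hz, h4, ?_⟩
  have hmem : ∀ x : ℂ, x ∈ Metric.sphere (0 : ℂ) 1 ↔ ‖x‖ = 1 := by
    intro x
    rw [mem_sphere_zero_iff_norm]
  refine Set.InvOn.bijOn (f' := phiMap n (-w)) ⟨?_, ?_⟩ ?_ ?_
  · intro x hx; exact phi_inv_aux n hn hw ((hmem x).mp hx)
  · intro x hx; exact h4 x ((hmem x).mp hx)
  · intro x hx; exact (hmem _).mpr (phi_abs_aux n hw ((hmem x).mp hx))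
  · intro x hx; exact (hmem _).mpr (phi_abs_aux n hwn ((hmem x).mp hx))
end

section
/- Fix a bijection p of the positive integers and a sequence (w_n) with |w_n| < 1 for all n. If Σ_{n≥1} |w_n|/n < ∞, then the functions Σ_N converge uniformly on ℝ as N → ∞ to a continuous, nondecreasing, surjective function Σ : ℝ → ℝ satisfying Σ(θ + 2π) = Σ(θ) + 2π for all θ. -/
open Filter

/-- The lift `Φ_n(w; θ) = θ − (2/n)·arctan( Im(w e^{inθ}) / (1 + Re(w e^{inθ})) )`. -/
noncomputable def PhiLift (n : ℕ+) (w : ℂ) (θ : ℝ) : ℝ :=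
  θ - (2 / ((n : ℕ) : ℝ)) * Real.arctan
    ((w * Complex.exp ((((n : ℕ) : ℂ)) * (θ : ℂ) * Complex.I)).im /
      (1 + (w * Complex.exp ((((n : ℕ) : ℂ)) * (θ : ℂ) * Complex.I)).re))

/-- `Σ_0(θ) = θ` and `Σ_N = Φ_{N′}(w_{N′};·) ∘ ⋯ ∘ Φ_{1′}(w_{1′};·)`, where `p(n) = n′`
is a fixed bijection (ordering) of the positive integers. -/
noncomputable def SigLift (p : ℕ+ ≃ ℕ+) (w : ℕ+ → ℂ) : ℕ → ℝ → ℝ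
  | 0 => fun θ => θ
  | N + 1 => fun θ =>
      PhiLift (p ⟨N + 1, N.succ_pos⟩) (w (p ⟨N + 1, N.succ_pos⟩)) (SigLift p w N θ)

namespace SigAux

/-- `u n w θ = w e^{inθ}`. -/
noncomputable def u (n : ℕ+) (w : ℂ) (θ : ℝ) : ℂ :=
  w * Complex.exp ((((n : ℕ) : ℂ)) * (θ : ℂ) * Complex.I)

variable (n : ℕ+) (w : ℂ)

lemma phiLift_eq (θ : ℝ) :
    PhiLift n w θ = θ - (2 / ((n : ℕ) : ℝ)) *
      Real.arctan ((u n w θ).im / (1 + (u n w θ).re)) := rfl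

lemma abs_u (θ : ℝ) : ‖u n w θ‖ = ‖w‖ := by
  simp [u, Complex.norm_exp]

lemma hasDerivAt_u (θ : ℝ) :
    HasDerivAt (u n w) ((((n : ℕ) : ℂ)) * Complex.I * u n w θ) θ := by
  have h1 : HasDerivAt (fun θ : ℝ => ((θ : ℝ) : ℂ)) 1 θ := Complex.ofRealCLM.hasDerivAt
  have h2 : HasDerivAt (fun θ : ℝ => (((n : ℕ) : ℂ)) * (θ : ℂ) * Complex.I)
      ((((n : ℕ) : ℂ)) * Complex.I) θ := by
    have := (h1.const_mul (((n : ℕ) : ℂ))).mul_const Complex.I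
    simpa using this
  have h3 := (h2.cexp).const_mul w
  have he : ((((n : ℕ) : ℂ)) * Complex.I) * u n w θ
      = w * (Complex.exp ((((n : ℕ) : ℂ)) * (θ : ℂ) * Complex.I) * ((((n : ℕ) : ℂ)) * Complex.I)) := by
    unfold u; ring
  rw [he]
  exact h3

lemma sq_add_sq (θ : ℝ) :
    (u n w θ).re ^ 2 + (u n w θ).im ^ 2 = ‖w‖ ^ 2 := by
  rw [← abs_u n w θ, Complex.sq_norm, Complex.normSq_apply]; ring

lemma one_add_re_pos (hw : ‖w‖ < 1) (θ : ℝ) : 0 < 1 + (u n w θ).re := by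
  have h1 : |(u n w θ).re| ≤ ‖u n w θ‖ := Complex.abs_re_le_norm _
  rw [abs_u] at h1
  have := abs_le.mp h1
  linarith [this.1]

noncomputable def phiDeriv (θ : ℝ) : ℝ :=
  (1 - ‖w‖ ^ 2) / ((1 + (u n w θ).re) ^ 2 + (u n w θ).im ^ 2)

lemma phiDeriv_pos (hw : ‖w‖ < 1) (θ : ℝ) : 0 < phiDeriv n w θ := by
  have h1 := one_add_re_pos n w hw θ
  have h2 : ‖w‖ ^ 2 < 1 := by nlinarith [norm_nonneg w]
  have h3 : 0 < (1 + (u n w θ).re) ^ 2 + (u n w θ).im ^ 2 := by positivity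
  exact div_pos (by linarith) h3

lemma hasDerivAt_phiLift (hw : ‖w‖ < 1) (θ : ℝ) :
    HasDerivAt (PhiLift n w) (phiDeriv n w θ) θ := by
  set R := (u n w θ).re with hRdef
  set I := (u n w θ).im with hIdef
  have hR : HasDerivAt (fun t => (u n w t).re) (-((n : ℕ) : ℝ) * I) θ := by
    have h := Complex.reCLM.hasFDerivAt.comp_hasDerivAt θ (hasDerivAt_u n w θ)
    simpa [hIdef, Function.comp_def] using h
  have hI : HasDerivAt (fun t => (u n w t).im) (((n : ℕ) : ℝ) * R) θ := by
    have h := Complex.imCLM.hasFDerivAt.comp_hasDerivAt θ (hasDerivAt_u n w θ)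
    simpa [hRdef, Function.comp_def] using h
  have hpos : 0 < 1 + R := one_add_re_pos n w hw θ
  have hd : HasDerivAt (fun t => 1 + (u n w t).re) (-((n : ℕ) : ℝ) * I) θ :=
    hR.const_add 1
  have hg : HasDerivAt (fun t => (u n w t).im / (1 + (u n w t).re))
      ((((n : ℕ) : ℝ) * R * (1 + R) - I * (-((n : ℕ) : ℝ) * I)) / (1 + R) ^ 2) θ :=
    hI.div hd (ne_of_gt hpos)
  have ha : HasDerivAt (fun t => Real.arctan ((u n w t).im / (1 + (u n w t).re)))
      ((1 / (1 + (I / (1 + R)) ^ 2)) *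
        ((((n : ℕ) : ℝ) * R * (1 + R) - I * (-((n : ℕ) : ℝ) * I)) / (1 + R) ^ 2)) θ :=
    (Real.hasDerivAt_arctan _).comp θ hg
  have hphi : HasDerivAt (PhiLift n w)
      (1 - 2 / ((n : ℕ) : ℝ) * ((1 / (1 + (I / (1 + R)) ^ 2)) *
        ((((n : ℕ) : ℝ) * R * (1 + R) - I * (-((n : ℕ) : ℝ) * I)) / (1 + R) ^ 2))) θ :=
    (hasDerivAt_id θ).sub (ha.const_mul (2 / ((n : ℕ) : ℝ)))
  have heq : 1 - 2 / ((n : ℕ) : ℝ) * ((1 / (1 + (I / (1 + R)) ^ 2)) *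
        ((((n : ℕ) : ℝ) * R * (1 + R) - I * (-((n : ℕ) : ℝ) * I)) / (1 + R) ^ 2))
      = phiDeriv n w θ := by
    have hn : ((n : ℕ) : ℝ) ≠ 0 := by positivity
    have hD : (1 + R) ^ 2 + I ^ 2 ≠ 0 := by positivity
    have hg2 : 1 + (I / (1 + R)) ^ 2 ≠ 0 := by positivity
    rw [phiDeriv, ← hRdef, ← hIdef, ← sq_add_sq n w θ, ← hRdef, ← hIdef]
    field_simp
    ring
  rw [← heq]
  exact hphi

lemma strictMono_phiLift (hw : ‖w‖ < 1) : StrictMono (PhiLift n w) :=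
  strictMono_of_hasDerivAt_pos (hasDerivAt_phiLift n w hw) (phiDeriv_pos n w hw)

lemma continuous_phiLift (hw : ‖w‖ < 1) : Continuous (PhiLift n w) :=
  Differentiable.continuous (fun θ => (hasDerivAt_phiLift n w hw θ).differentiableAt)

lemma arctan_nonneg {x : ℝ} (hx : 0 ≤ x) : 0 ≤ Real.arctan x := by
  rw [← Real.arctan_zero]
  exact Real.arctan_strictMono.monotone hx

lemma abs_arctan_le_abs (x : ℝ) : |Real.arctan x| ≤ |x| := by
  have key : ∀ y : ℝ, 0 ≤ y → Real.arctan y ≤ y := by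
    intro y hy
    have h1 : 0 ≤ Real.arctan y := arctan_nonneg hy
    have h2 := Real.le_tan h1 (Real.arctan_lt_pi_div_two y)
    rwa [Real.tan_arctan] at h2
  rcases le_total 0 x with hx | hx
  · rw [abs_of_nonneg hx, abs_of_nonneg (arctan_nonneg hx)]
    exact key x hx
  · have hx' : 0 ≤ -x := by linarith
    rw [abs_of_nonpos hx, abs_of_nonpos (by simpa using arctan_nonneg hx' ), ← Real.arctan_neg]
    exact key (-x) hx'

lemma abs_phiLift_sub_le (hw : ‖w‖ < 1) (θ : ℝ) :
    |PhiLift n w θ - θ| ≤ 2 * Real.pi * (‖w‖ / ((n : ℕ) : ℝ)) := by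
  have hn : (0 : ℝ) < ((n : ℕ) : ℝ) := by positivity
  have habs : |PhiLift n w θ - θ|
      = (2 / ((n : ℕ) : ℝ)) * |Real.arctan ((u n w θ).im / (1 + (u n w θ).re))| := by
    rw [phiLift_eq]
    rw [show θ - 2 / ((n : ℕ) : ℝ) * Real.arctan ((u n w θ).im / (1 + (u n w θ).re)) - θ
        = -(2 / ((n : ℕ) : ℝ) * Real.arctan ((u n w θ).im / (1 + (u n w θ).re))) by ring]
    rw [abs_neg, abs_mul, abs_of_nonneg (by positivity : (0:ℝ) ≤ 2 / ((n : ℕ) : ℝ))]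
  rw [habs]
  have hmain : |Real.arctan ((u n w θ).im / (1 + (u n w θ).re))| ≤ Real.pi * ‖w‖ := by
    rcases le_or_gt (1/2 : ℝ) (‖w‖) with h | h
    · have h1 : |Real.arctan ((u n w θ).im / (1 + (u n w θ).re))| ≤ Real.pi / 2 :=
        le_of_lt (abs_lt.2 ⟨Real.neg_pi_div_two_lt_arctan _, Real.arctan_lt_pi_div_two _⟩)
      have : Real.pi / 2 ≤ Real.pi * ‖w‖ := by nlinarith [Real.pi_pos]
      linarith
    · have hR := one_add_re_pos n w hw θ
      have hI : |(u n w θ).im| ≤ ‖w‖ := by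
        rw [← abs_u n w θ]; exact Complex.abs_im_le_norm _
      have hRlow : 1 - ‖w‖ ≤ 1 + (u n w θ).re := by
        have h1 : |(u n w θ).re| ≤ ‖w‖ := by
          rw [← abs_u n w θ]; exact Complex.abs_re_le_norm _
        have := (abs_le.mp h1).1
        linarith
      have hgabs : |(u n w θ).im / (1 + (u n w θ).re)| ≤ 2 * ‖w‖ := by
        rw [abs_div, abs_of_pos hR, div_le_iff₀ hR]
        nlinarith [norm_nonneg w]
      calc |Real.arctan ((u n w θ).im / (1 + (u n w θ).re))|
          ≤ |(u n w θ).im / (1 + (u n w θ).re)| := abs_arctan_le_abs _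
        _ ≤ 2 * ‖w‖ := hgabs
        _ ≤ Real.pi * ‖w‖ := by nlinarith [Real.pi_gt_three, norm_nonneg w]
  calc (2 / ((n : ℕ) : ℝ)) * |Real.arctan ((u n w θ).im / (1 + (u n w θ).re))|
      ≤ (2 / ((n : ℕ) : ℝ)) * (Real.pi * ‖w‖) := by
        apply mul_le_mul_of_nonneg_left hmain (by positivity)
    _ = 2 * Real.pi * (‖w‖ / ((n : ℕ) : ℝ)) := by field_simp

lemma u_periodic (θ : ℝ) : u n w (θ + 2 * Real.pi) = u n w θ := by
  unfold u
  congr 1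
  rw [show (((n : ℕ) : ℂ)) * (((θ + 2 * Real.pi : ℝ)) : ℂ) * Complex.I
      = (((n : ℕ) : ℂ)) * (θ : ℂ) * Complex.I + ((n : ℕ) : ℂ) * (2 * (Real.pi : ℂ) * Complex.I) by
    push_cast; ring]
  rw [Complex.exp_add, Complex.exp_nat_mul, Complex.exp_two_pi_mul_I, one_pow, mul_one]

lemma phiLift_periodic (θ : ℝ) :
    PhiLift n w (θ + 2 * Real.pi) = PhiLift n w θ + 2 * Real.pi := by
  rw [phiLift_eq, phiLift_eq, u_periodic]
  ring

end SigAux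

/-- If `Σ_{n≥1} |w_n|/n < ∞`, then the `Σ_N` converge uniformly on `ℝ` to a continuous,
nondecreasing, surjective function `Σ : ℝ → ℝ` satisfying `Σ(θ + 2π) = Σ(θ) + 2π`. -/
theorem sigLift_tendstoUniformly_of_summable (p : ℕ+ ≃ ℕ+) (w : ℕ+ → ℂ)
    (hw : ∀ n, ‖w n‖ < 1)
    (hsum : Summable fun n : ℕ+ => ‖w n‖ / ((n : ℕ) : ℝ)) :
    ∃ S : ℝ → ℝ, TendstoUniformly (fun N => SigLift p w N) S atTop ∧
      Continuous S ∧ Monotone S ∧ Function.Surjective S ∧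
      ∀ θ : ℝ, S (θ + 2 * Real.pi) = S θ + 2 * Real.pi := by
  classical
  -- the index map
  set i : ℕ → ℕ+ := fun k => p ⟨k + 1, k.succ_pos⟩ with hidef
  have hi : Function.Injective i := by
    intro a b hab
    have h2 : (⟨a + 1, a.succ_pos⟩ : ℕ+) = ⟨b + 1, b.succ_pos⟩ := p.injective hab
    have h3 : a + 1 = b + 1 := congrArg (fun x : ℕ+ => (x : ℕ)) h2
    omega
  -- differences
  set d : ℕ → ℝ → ℝ := fun k θ => SigLift p w (k + 1) θ - SigLift p w k θ with hddef
  set c : ℕ → ℝ := fun k => 2 * Real.pi * (‖w (i k)‖ / (((i k : ℕ)) : ℝ)) with hcdef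
  have hc : Summable c := by
    have h1 : Summable ((fun n : ℕ+ => ‖w n‖ / ((n : ℕ) : ℝ)) ∘ i) :=
      hsum.comp_injective hi
    exact (h1.mul_left (2 * Real.pi))
  have hfu : ∀ k θ, ‖d k θ‖ ≤ c k := by
    intro k θ
    have : d k θ = PhiLift (i k) (w (i k)) (SigLift p w k θ) - SigLift p w k θ := rfl
    rw [this, Real.norm_eq_abs]
    exact SigAux.abs_phiLift_sub_le (i k) (w (i k)) (hw (i k)) _
  -- the limit function
  set S : ℝ → ℝ := fun θ => θ + ∑' k, d k θ with hSdef
  have key : TendstoUniformly (fun N θ => ∑ k ∈ Finset.range N, d k θ)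
      (fun θ => ∑' k, d k θ) atTop := tendstoUniformly_tsum_nat hc hfu
  have hconst : TendstoUniformly (fun (_ : ℕ) (θ : ℝ) => θ) (fun θ => θ) atTop := by
    intro v hv
    exact Eventually.of_forall fun N θ => refl_mem_uniformity hv
  have hSig : ∀ N θ, SigLift p w N θ = θ + ∑ k ∈ Finset.range N, d k θ := by
    intro N θ
    rw [hddef, Finset.sum_range_sub (fun k => SigLift p w k θ)]
    show SigLift p w N θ = θ + (SigLift p w N θ - SigLift p w 0 θ)
    show SigLift p w N θ = θ + (SigLift p w N θ - θ)
    ring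
  have hTU : TendstoUniformly (fun N => SigLift p w N) S atTop := by
    have heq : (fun N => SigLift p w N) = fun N θ => θ + ∑ k ∈ Finset.range N, d k θ :=
      funext fun N => funext fun θ => hSig N θ
    rw [heq]
    exact hconst.add key
  -- pointwise convergence
  have hpt : ∀ θ, Tendsto (fun N => SigLift p w N θ) atTop (nhds (S θ)) :=
    fun θ => hTU.tendsto_at θ
  -- monotonicity of each SigLift
  have hmono : ∀ N, Monotone (SigLift p w N) := by
    intro N
    induction N with
    | zero => exact fun a b hab => hab
    | succ N ih =>
      exact fun a b hab =>
        ((SigAux.strictMono_phiLift _ _ (hw _)).monotone (ih hab))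
  -- continuity of each SigLift
  have hcont : ∀ N, Continuous (SigLift p w N) := by
    intro N
    induction N with
    | zero => exact continuous_id
    | succ N ih => exact (SigAux.continuous_phiLift _ _ (hw _)).comp ih
  -- periodicity of each SigLift
  have hper : ∀ N θ, SigLift p w N (θ + 2 * Real.pi) = SigLift p w N θ + 2 * Real.pi := by
    intro N
    induction N with
    | zero => intro θ; rfl
    | succ N ih =>
      intro θ
      show PhiLift _ _ (SigLift p w N (θ + 2 * Real.pi)) = _
      rw [ih θ]
      exact SigAux.phiLift_periodic _ _ _
  refine ⟨S, hTU, ?_, ?_, ?_, ?_⟩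
  · exact hTU.continuous (Frequently.of_forall hcont)
  · intro a b hab
    exact le_of_tendsto_of_tendsto' (hpt a) (hpt b) fun N => hmono N hab
  · -- surjective
    have hCnn : 0 ≤ ∑' k, c k := tsum_nonneg fun k => by positivity
    have hbound : ∀ θ, |S θ - θ| ≤ ∑' k, c k := by
      intro θ
      have hsd : Summable fun k => ‖d k θ‖ :=
        Summable.of_nonneg_of_le (fun k => norm_nonneg _) (fun k => hfu k θ) hc
      have h1 : ‖∑' k, d k θ‖ ≤ ∑' k, ‖d k θ‖ := norm_tsum_le_tsum_norm hsd
      have h2 : ∑' k, ‖d k θ‖ ≤ ∑' k, c k := Summable.tsum_le_tsum (fun k => hfu k θ) hsd hc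
      have : S θ - θ = ∑' k, d k θ := by rw [hSdef]; ring
      rw [this]
      exact le_trans h1 h2
    have htop : Tendsto S atTop atTop := by
      apply tendsto_atTop_mono (fun θ => ?_)
        (tendsto_atTop_add_const_right atTop (-(∑' k, c k)) tendsto_id)
      have := (abs_le.mp (hbound θ)).1
      simp only [id]
      linarith
    have hbot : Tendsto S atBot atBot := by
      apply tendsto_atBot_mono (fun θ => ?_)
        (tendsto_atBot_add_const_right atBot (∑' k, c k) tendsto_id)
      have := (abs_le.mp (hbound θ)).2
      simp only [id]
      linarith
    exact (hTU.continuous (Frequently.of_forall hcont)).surjective htop hbot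
  · intro θ
    have h1 : Tendsto (fun N => SigLift p w N (θ + 2 * Real.pi)) atTop
        (nhds (S (θ + 2 * Real.pi))) := hpt _
    have h2 : Tendsto (fun N => SigLift p w N θ + 2 * Real.pi) atTop
        (nhds (S θ + 2 * Real.pi)) := (hpt θ).add_const _
    have he : (fun N => SigLift p w N (θ + 2 * Real.pi))
        = fun N => SigLift p w N θ + 2 * Real.pi := funext fun N => hper N θ
    rw [he] at h1
    exact tendsto_nhds_unique h1 h2
end

section
/- Fix a bijection p of the positive integers and a sequence (w_n) with |w_n| < 1 for all n. If Σ_{n≥1} |w_n| < ∞, then: (i) for every θ ∈ ℝ the infinite product ∏_{n≥1} (1 − |w_{n′}|²)/|1 + w_{n′} e^{i n′ Σ_{n−1}(θ)}|² converges absolutely, uniformly in θ, to a positive limit; (ii) the uniform limit Σ of the Σ_N is continuously differentiable and Σ′(θ) equals this infinite product for every θ; and (iii) Σ is strictly increasing, Σ(θ+2π) = Σ(θ)+2π, and the inverse function of Σ is also continuously differentiable, so that σ(e^{iθ}) = e^{iΣ(θ)} is a C¹ diffeomorphism of S¹. -/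
open Filter

/-- The `n`-th factor `(1 − |w_{n′}|²)/|1 + w_{n′} e^{i n′ Σ_{n−1}(θ)}|²` of the product
formula for `Σ′`; here `k = 0, 1, 2, …` corresponds to `n = k + 1`. -/
noncomputable def derivFactor (p : ℕ+ ≃ ℕ+) (w : ℕ+ → ℂ) (k : ℕ) (θ : ℝ) : ℝ :=
  (1 - ‖w (p ⟨k + 1, k.succ_pos⟩)‖ ^ 2) /
    ‖1 + w (p ⟨k + 1, k.succ_pos⟩) *
      Complex.exp ((((p ⟨k + 1, k.succ_pos⟩ : ℕ)) : ℂ) *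
        ((SigLift p w k θ : ℝ) : ℂ) * Complex.I)‖ ^ 2

lemma SLA.abs_arctan_le_abs (x : ℝ) : |Real.arctan x| ≤ |x| := by
  have key : ∀ y : ℝ, 0 ≤ y → Real.arctan y ≤ y := by
    intro y hy
    have hy0 : (0:ℝ) ≤ Real.arctan y := by
      rw [← Real.arctan_zero]; exact Real.arctan_strictMono.monotone hy
    have h1 : Real.arctan y ≤ Real.tan (Real.arctan y) :=
      Real.le_tan hy0 (Real.arctan_lt_pi_div_two y)
    rwa [Real.tan_arctan] at h1
  rcases le_total 0 x with h | h
  · have h0 : (0:ℝ) ≤ Real.arctan x := by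
      rw [← Real.arctan_zero]; exact Real.arctan_strictMono.monotone h
    rw [_root_.abs_of_nonneg h0, _root_.abs_of_nonneg h]; exact key x h
  · have h0 : Real.arctan x ≤ 0 := by
      rw [← Real.arctan_zero]; exact Real.arctan_strictMono.monotone h
    rw [_root_.abs_of_nonpos h0, _root_.abs_of_nonpos h]
    have := key (-x) (by linarith)
    rw [Real.arctan_neg] at this
    linarith

lemma SLA.zfun_hasDerivAt (n : ℕ+) (w : ℂ) (θ : ℝ) :
    HasDerivAt (fun t : ℝ => w * Complex.exp ((((n : ℕ) : ℂ)) * (t : ℂ) * Complex.I))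
      (((n : ℕ) : ℂ) * Complex.I * (w * Complex.exp ((((n : ℕ) : ℂ)) * (θ : ℂ) * Complex.I))) θ := by
  have h1 : HasDerivAt (fun t : ℂ => w * Complex.exp ((((n : ℕ) : ℂ)) * t * Complex.I))
      (w * (Complex.exp ((((n : ℕ) : ℂ)) * (θ:ℂ) * Complex.I) * (((n : ℕ) : ℂ) * Complex.I))) (θ:ℂ) := by
    have h2 : HasDerivAt (fun t : ℂ => (((n : ℕ) : ℂ)) * t * Complex.I) (((n : ℕ) : ℂ) * Complex.I) (θ:ℂ) := by
      simpa using ((hasDerivAt_id (θ:ℂ)).const_mul (((n : ℕ) : ℂ))).mul_const Complex.I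
    simpa using ((h2.cexp).const_mul w)
  have := h1.comp_ofReal
  convert this using 1
  ring

lemma SLA.abs_zfun (n : ℕ+) (w : ℂ) (t : ℝ) :
    ‖w * Complex.exp ((((n : ℕ) : ℂ)) * (t : ℂ) * Complex.I)‖ = ‖w‖ := by
  rw [norm_mul, Complex.norm_exp]
  simp [Complex.mul_re]

lemma SLA.abs_one_add_lower (u : ℂ) : 1 - ‖u‖ ≤ ‖1 + u‖ := by
  have h := norm_add_le (1 + u) (-u)
  simp only [add_neg_cancel_right, norm_neg] at h
  simp only [norm_one] at h
  linarith

lemma SLA.abs_one_add_upper (u : ℂ) : ‖1 + u‖ ≤ 1 + ‖u‖ := by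
  simpa using norm_add_le 1 u

lemma SLA.re_lower (n : ℕ+) (w : ℂ) (t : ℝ) :
    1 - ‖w‖ ≤ 1 + (w * Complex.exp ((((n : ℕ) : ℂ)) * (t : ℂ) * Complex.I)).re := by
  have h := Complex.abs_re_le_norm (w * Complex.exp ((((n : ℕ) : ℂ)) * (t : ℂ) * Complex.I))
  rw [SLA.abs_zfun] at h
  have := abs_le.mp h
  linarith [this.1]

lemma SLA.phiLift_hasDerivAt (n : ℕ+) (w : ℂ) (hw : ‖w‖ < 1) (θ : ℝ) :
    HasDerivAt (PhiLift n w)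
      ((1 - ‖w‖ ^ 2) /
        ‖1 + w * Complex.exp ((((n : ℕ) : ℂ)) * (θ : ℂ) * Complex.I)‖ ^ 2) θ := by
  set z : ℝ → ℂ := fun t => w * Complex.exp ((((n : ℕ) : ℂ)) * (t : ℂ) * Complex.I) with hz
  have hzd := SLA.zfun_hasDerivAt n w θ
  have hre : HasDerivAt (fun t => (z t).re) (-( (n:ℕ) : ℝ) * (z θ).im) θ := by
    have := (Complex.reCLM.hasFDerivAt.comp_hasDerivAt θ hzd)
    refine this.congr_deriv ?_
    simp only [Complex.reCLM_apply, Complex.mul_re, Complex.mul_im, Complex.I_re, Complex.I_im,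
      Complex.ofReal_re, Complex.ofReal_im, Complex.natCast_re, Complex.natCast_im]
    rw [Complex.mul_im]
    ring
  have him : HasDerivAt (fun t => (z t).im) (((n:ℕ) : ℝ) * (z θ).re) θ := by
    have := (Complex.imCLM.hasFDerivAt.comp_hasDerivAt θ hzd)
    refine this.congr_deriv ?_
    simp only [Complex.imCLM_apply, Complex.mul_re, Complex.mul_im, Complex.I_re, Complex.I_im,
      Complex.ofReal_re, Complex.ofReal_im, Complex.natCast_re, Complex.natCast_im]
    rw [Complex.mul_re]
    ring
  have hposd : 0 < 1 + (z θ).re := lt_of_lt_of_le (by linarith) (SLA.re_lower n w θ)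
  have hu : HasDerivAt (fun t => (z t).im / (1 + (z t).re))
      ((((n:ℕ) : ℝ) * (z θ).re * (1 + (z θ).re) - (z θ).im * (-((n:ℕ) : ℝ) * (z θ).im)) / (1 + (z θ).re)^2) θ :=
    him.div (hre.const_add 1) (ne_of_gt hposd)
  have harc := hu.arctan
  have hphi := (hasDerivAt_id θ).sub ((harc.const_mul (2 / ((n : ℕ) : ℝ))))
  refine hphi.congr_deriv ?_
  have hnormsq : ‖w‖ ^ 2 = (z θ).re^2 + (z θ).im^2 := by
    rw [← SLA.abs_zfun n w θ, Complex.sq_norm, Complex.normSq_apply]; ring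
  have habs1 : ‖1 + z θ‖ ^ 2 = (1 + (z θ).re)^2 + (z θ).im^2 := by
    rw [Complex.sq_norm, Complex.normSq_apply]
    simp
    ring
  rw [hnormsq, habs1]
  have hne : (1 + (z θ).re) ≠ 0 := ne_of_gt hposd
  have hne2 : (1 + (z θ).re)^2 + (z θ).im^2 ≠ 0 := by positivity
  have hn : ((n:ℕ):ℝ) ≠ 0 := by exact_mod_cast n.ne_zero
  have h1u : 1 + ((z θ).im / (1 + (z θ).re))^2 = ((1 + (z θ).re)^2 + (z θ).im^2)/(1 + (z θ).re)^2 := by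
    field_simp
  rw [h1u]
  field_simp
  ring

/-- Arithmetic bounds for the derivative factor. -/
lemma SLA.factor_bounds {a b : ℝ} (ha0 : 0 ≤ a) (ha1 : a < 1) (hb1 : 1 - a ≤ b) (hb2 : b ≤ 1 + a) :
    (1-a)/(1+a) ≤ (1-a^2)/b^2 ∧ (1-a^2)/b^2 ≤ (1+a)/(1-a) ∧
      |(1-a^2)/b^2 - 1| ≤ 2*a*(1+a)/(1-a)^2 := by
  have hb0 : 0 < b := lt_of_lt_of_le (by linarith) hb1
  have hb2' : b^2 ≤ (1+a)^2 := by nlinarith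
  have hb1' : (1-a)^2 ≤ b^2 := by nlinarith
  have hbsq : 0 < b^2 := by positivity
  have h1a : 0 < 1 - a := by linarith
  have h1a' : 0 < 1 + a := by linarith
  refine ⟨?_, ?_, ?_⟩
  · rw [div_le_div_iff₀ h1a' hbsq]
    nlinarith
  · rw [div_le_div_iff₀ hbsq h1a]
    nlinarith
  · have hnum : |(1 - a^2) - b^2| ≤ 2*a*(1+a) := by
      rw [abs_le]; constructor <;> nlinarith
    have heq : (1-a^2)/b^2 - 1 = ((1 - a^2) - b^2)/b^2 := by field_simp
    rw [heq, abs_div, _root_.abs_of_pos hbsq]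
    exact div_le_div₀ (by positivity) hnum (by positivity) hb1'

lemma SLA.phiLift_dist (n : ℕ+) (w : ℂ) (hw : ‖w‖ < 1) (θ : ℝ) :
    |PhiLift n w θ - θ| ≤ 2 * ‖w‖ / (1 - ‖w‖) := by
  set z := w * Complex.exp ((((n : ℕ) : ℂ)) * (θ : ℂ) * Complex.I) with hzdef
  have ha0 : 0 ≤ ‖w‖ := norm_nonneg w
  have h1a : 0 < 1 - ‖w‖ := by linarith
  have hposd : 0 < 1 + z.re := lt_of_lt_of_le h1a (SLA.re_lower n w θ)
  have him : |z.im| ≤ ‖w‖ := by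
    rw [← SLA.abs_zfun n w θ]; exact Complex.abs_im_le_norm z
  have hu : |z.im / (1 + z.re)| ≤ ‖w‖ / (1 - ‖w‖) := by
    rw [abs_div, _root_.abs_of_pos hposd]
    exact div_le_div₀ ha0 him h1a (SLA.re_lower n w θ)
  have harc : |Real.arctan (z.im / (1 + z.re))| ≤ ‖w‖ / (1 - ‖w‖) :=
    (SLA.abs_arctan_le_abs _).trans hu
  have hn1 : (1:ℝ) ≤ ((n:ℕ) : ℝ) := by exact_mod_cast n.one_le
  have h2n : 2 / ((n:ℕ) : ℝ) ≤ 2 := by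
    rw [div_le_iff₀ (by linarith)]; nlinarith
  have h2n0 : 0 ≤ 2 / ((n:ℕ) : ℝ) := by positivity
  have : PhiLift n w θ - θ = -(2 / ((n:ℕ) : ℝ) * Real.arctan (z.im / (1 + z.re))) := by
    simp [PhiLift, hzdef]
  rw [this, abs_neg, abs_mul, _root_.abs_of_nonneg h2n0]
  calc 2 / ((n:ℕ) : ℝ) * |Real.arctan (z.im / (1 + z.re))|
      ≤ 2 * (‖w‖ / (1 - ‖w‖)) := by
        apply mul_le_mul h2n harc (abs_nonneg _) (by norm_num)
    _ = 2 * ‖w‖ / (1 - ‖w‖) := by ring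

lemma SLA.phiLift_periodic (n : ℕ+) (w : ℂ) (θ : ℝ) :
    PhiLift n w (θ + 2 * Real.pi) = PhiLift n w θ + 2 * Real.pi := by
  have hexp : Complex.exp ((((n : ℕ) : ℂ)) * ((θ + 2 * Real.pi : ℝ) : ℂ) * Complex.I)
      = Complex.exp ((((n : ℕ) : ℂ)) * (θ : ℂ) * Complex.I) := by
    have h1 : (((n : ℕ) : ℂ)) * ((θ + 2 * Real.pi : ℝ) : ℂ) * Complex.I
        = (((n : ℕ) : ℂ)) * (θ : ℂ) * Complex.I + ((n:ℕ) : ℤ) * (2 * (Real.pi : ℂ) * Complex.I) := by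
      push_cast; ring
    rw [h1, Complex.exp_add, Complex.exp_int_mul_two_pi_mul_I, mul_one]
  unfold PhiLift
  rw [hexp]
  ring

lemma SLA.exp_dist_le {C x y : ℝ} (hx : x ≤ C) (hy : y ≤ C) :
    |Real.exp x - Real.exp y| ≤ Real.exp C * |x - y| := by
  have key : ∀ u v : ℝ, v ≤ u → u ≤ C → Real.exp u - Real.exp v ≤ Real.exp C * (u - v) := by
    intro u v huv hu
    have h1 := Real.add_one_le_exp (v - u)
    have h2 : Real.exp u * ((v - u) + 1) ≤ Real.exp u * Real.exp (v - u) :=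
      mul_le_mul_of_nonneg_left h1 (Real.exp_pos u).le
    rw [← Real.exp_add] at h2
    simp only [add_sub_cancel] at h2
    have h3 : Real.exp u ≤ Real.exp C := Real.exp_le_exp.mpr hu
    nlinarith [Real.exp_pos u]
  rcases le_total y x with h | h
  · have h1 : Real.exp y ≤ Real.exp x := Real.exp_le_exp.mpr h
    rw [_root_.abs_of_nonneg (by linarith), _root_.abs_of_nonneg (by linarith)]
    exact key x y h hx
  · have h1 : Real.exp x ≤ Real.exp y := Real.exp_le_exp.mpr h
    rw [_root_.abs_of_nonpos (by linarith), _root_.abs_of_nonpos (by linarith)]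
    have := key y x h hy
    linarith

lemma SLA.sigLift_hasDerivAt (p : ℕ+ ≃ ℕ+) (w : ℕ+ → ℂ) (hw : ∀ n, ‖w n‖ < 1) :
    ∀ (N : ℕ) (θ : ℝ), HasDerivAt (SigLift p w N) (∏ k ∈ Finset.range N, derivFactor p w k θ) θ := by
  intro N
  induction N with
  | zero => intro θ; simpa [SigLift] using hasDerivAt_id' θ
  | succ N ih =>
    intro θ
    have hphi := SLA.phiLift_hasDerivAt (p ⟨N + 1, N.succ_pos⟩) (w (p ⟨N + 1, N.succ_pos⟩))
      (hw _) (SigLift p w N θ)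
    have hcomp := hphi.comp θ (ih θ)
    rw [Finset.prod_range_succ]
    refine hcomp.congr_deriv ?_
    symm
    rw [mul_comm]
    rfl

/-- If `Σ |w_n| < ∞`, then: (i) the infinite product
`∏ (1 − |w_{n′}|²)/|1 + w_{n′} e^{i n′ Σ_{n−1}(θ)}|²` converges absolutely, uniformly in `θ`,
to a positive limit; (ii) the uniform limit `Σ` of the `Σ_N` is `C¹` with `Σ′` equal to this
product; (iii) `Σ` is strictly increasing with `Σ(θ+2π) = Σ(θ)+2π` and `C¹` inverse, so that
`σ(e^{iθ}) = e^{iΣ(θ)}` is a `C¹` diffeomorphism of the circle. -/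
theorem sigLift_c1_of_l1 (p : ℕ+ ≃ ℕ+) (w : ℕ+ → ℂ)
    (hw : ∀ n, ‖w n‖ < 1)
    (hsum : Summable fun n : ℕ+ => ‖w n‖) :
    ∃ L S T : ℝ → ℝ,
      (∀ θ, 0 < L θ) ∧
      (∀ θ, Summable fun k : ℕ => |derivFactor p w k θ - 1|) ∧
      TendstoUniformly (fun N θ => ∏ k ∈ Finset.range N, derivFactor p w k θ) L atTop ∧
      TendstoUniformly (fun N => SigLift p w N) S atTop ∧
      ContDiff ℝ 1 S ∧ (∀ θ, deriv S θ = L θ) ∧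
      StrictMono S ∧ (∀ θ : ℝ, S (θ + 2 * Real.pi) = S θ + 2 * Real.pi) ∧
      (∀ θ, T (S θ) = θ) ∧ (∀ θ, S (T θ) = θ) ∧ ContDiff ℝ 1 T := by

  classical
  set A : ℕ → ℝ := fun k => ‖w (p ⟨k + 1, k.succ_pos⟩)‖ with hA
  have hA0 : ∀ k, 0 ≤ A k := fun k => norm_nonneg _
  have hA1 : ∀ k, A k < 1 := fun k => hw _
  have hAsum : Summable A := by
    have h := (Equiv.summable_iff (Equiv.pnatEquivNat.symm.trans p)).mpr hsum
    exact h.congr (fun k => rfl)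
  set c : ℕ → ℝ := fun k => 2 * A k / (1 - A k) with hc
  set d : ℕ → ℝ := fun k => 2 * A k * (1 + A k) / (1 - A k) ^ 2 with hd
  have h1A : ∀ k, 0 < 1 - A k := fun k => by linarith [hA1 k]
  have hc0 : ∀ k, 0 ≤ c k := fun k => div_nonneg (by linarith [hA0 k]) (h1A k).le
  have hd0 : ∀ k, 0 ≤ d k := fun k => div_nonneg (by nlinarith [hA0 k]) (by positivity)
  obtain ⟨N₀, hN₀⟩ : ∃ N₀, ∀ k, N₀ ≤ k → A k ≤ 1 / 2 := by
    have h1 : ∀ᶠ k in atTop, A k < 1 / 2 :=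
      hAsum.tendsto_atTop_zero.eventually_lt_const (by norm_num)
    obtain ⟨N₀, hN₀⟩ := eventually_atTop.mp h1
    exact ⟨N₀, fun k hk => (hN₀ k hk).le⟩
  have hA4sum : Summable (fun k => 4 * A (k + N₀)) :=
    (((summable_nat_add_iff N₀).mpr hAsum)).mul_left 4
  have hA12sum : Summable (fun k => 12 * A (k + N₀)) :=
    (((summable_nat_add_iff N₀).mpr hAsum)).mul_left 12
  have hcsum : Summable c := by
    rw [← summable_nat_add_iff N₀]
    refine Summable.of_nonneg_of_le (fun k => hc0 _) (fun k => ?_) hA4sum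
    have hk := hN₀ (k + N₀) (Nat.le_add_left _ _)
    rw [hc]
    rw [div_le_iff₀ (h1A _)]
    nlinarith [hA0 (k + N₀)]
  have hdsum : Summable d := by
    rw [← summable_nat_add_iff N₀]
    refine Summable.of_nonneg_of_le (fun k => hd0 _) (fun k => ?_) hA12sum
    have hk := hN₀ (k + N₀) (Nat.le_add_left _ _)
    rw [hd]
    rw [div_le_iff₀ (pow_pos (h1A _) 2)]
    nlinarith [hA0 (k + N₀), mul_nonneg (hA0 (k + N₀)) (mul_nonneg
      (by linarith : (0:ℝ) ≤ 1 - 2 * A (k + N₀)) (by linarith [hA1 (k + N₀)] : (0:ℝ) ≤ 5 - 3 * A (k + N₀)))]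
  -- bounds on the factors
  have habs_lower : ∀ k θ, 1 - A k ≤ ‖1 + w (p ⟨k + 1, k.succ_pos⟩) *
      Complex.exp ((((p ⟨k + 1, k.succ_pos⟩ : ℕ)) : ℂ) * ((SigLift p w k θ : ℝ) : ℂ) * Complex.I)‖ := by
    intro k θ
    have h := SLA.abs_one_add_lower (w (p ⟨k + 1, k.succ_pos⟩) *
      Complex.exp ((((p ⟨k + 1, k.succ_pos⟩ : ℕ)) : ℂ) * ((SigLift p w k θ : ℝ) : ℂ) * Complex.I))
    rwa [SLA.abs_zfun] at h
  have habs_upper : ∀ k θ, ‖1 + w (p ⟨k + 1, k.succ_pos⟩) *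
      Complex.exp ((((p ⟨k + 1, k.succ_pos⟩ : ℕ)) : ℂ) * ((SigLift p w k θ : ℝ) : ℂ) * Complex.I)‖ ≤ 1 + A k := by
    intro k θ
    have h := SLA.abs_one_add_upper (w (p ⟨k + 1, k.succ_pos⟩) *
      Complex.exp ((((p ⟨k + 1, k.succ_pos⟩ : ℕ)) : ℂ) * ((SigLift p w k θ : ℝ) : ℂ) * Complex.I))
    rwa [SLA.abs_zfun] at h
  have hFb : ∀ k θ, (1 - A k) / (1 + A k) ≤ derivFactor p w k θ ∧
      derivFactor p w k θ ≤ (1 + A k) / (1 - A k) ∧ |derivFactor p w k θ - 1| ≤ d k := by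
    intro k θ
    have h := SLA.factor_bounds (hA0 k) (hA1 k) (habs_lower k θ) (habs_upper k θ)
    exact h
  have hFpos : ∀ k θ, 0 < derivFactor p w k θ := fun k θ =>
    lt_of_lt_of_le (div_pos (h1A k) (by linarith [hA0 k])) (hFb k θ).1
  have hsummable2 : ∀ θ, Summable fun k : ℕ => |derivFactor p w k θ - 1| := fun θ =>
    Summable.of_nonneg_of_le (fun k => abs_nonneg _) (fun k => (hFb k θ).2.2) hdsum
  -- log bounds
  have hg : ∀ k θ, |Real.log (derivFactor p w k θ)| ≤ c k := by
    intro k θ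
    have hub : Real.log (derivFactor p w k θ) ≤ c k := by
      calc Real.log (derivFactor p w k θ) ≤ Real.log ((1 + A k) / (1 - A k)) :=
            Real.log_le_log (hFpos k θ) (hFb k θ).2.1
        _ ≤ (1 + A k) / (1 - A k) - 1 :=
            Real.log_le_sub_one_of_pos (div_pos (by linarith [hA0 k]) (h1A k))
        _ = c k := by
            show _ = 2 * A k / (1 - A k)
            rw [div_sub_one (h1A k).ne']
            congr 1
            ring
    have hlb : -c k ≤ Real.log (derivFactor p w k θ) := by
      have h1 : Real.log ((1 - A k) / (1 + A k)) ≤ Real.log (derivFactor p w k θ) :=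
        Real.log_le_log (div_pos (h1A k) (by linarith [hA0 k])) (hFb k θ).1
      have h2 : Real.log ((1 - A k) / (1 + A k)) = -Real.log ((1 + A k) / (1 - A k)) := by
        rw [show (1 - A k) / (1 + A k) = ((1 + A k) / (1 - A k))⁻¹ by
          rw [inv_div], Real.log_inv]
      have h3 : Real.log ((1 + A k) / (1 - A k)) ≤ c k := by
        calc Real.log ((1 + A k) / (1 - A k)) ≤ (1 + A k) / (1 - A k) - 1 :=
              Real.log_le_sub_one_of_pos (div_pos (by linarith [hA0 k]) (h1A k))
          _ = c k := by
              show _ = 2 * A k / (1 - A k)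
              rw [div_sub_one (h1A k).ne']
              congr 1
              ring
      linarith
    exact abs_le.mpr ⟨hlb, hub⟩
  set G : ℝ → ℝ := fun θ => ∑' k, Real.log (derivFactor p w k θ) with hG
  have hGsum : ∀ θ, Summable fun k => Real.log (derivFactor p w k θ) := fun θ =>
    Summable.of_norm_bounded hcsum (fun k => by rw [Real.norm_eq_abs]; exact hg k θ)
  have hGuni : TendstoUniformly
      (fun N θ => ∑ k ∈ Finset.range N, Real.log (derivFactor p w k θ)) G atTop :=
    tendstoUniformly_tsum_nat hcsum (fun k θ => by rw [Real.norm_eq_abs]; exact hg k θ)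
  set C : ℝ := ∑' k, c k with hCdef
  have hGb : ∀ θ, |G θ| ≤ C := by
    intro θ
    calc |G θ| ≤ ∑' k, |Real.log (derivFactor p w k θ)| := by
          simpa [Real.norm_eq_abs] using norm_tsum_le_tsum_norm
            (f := fun k => Real.log (derivFactor p w k θ))
            (by simpa [Real.norm_eq_abs] using (hGsum θ).abs)
      _ ≤ ∑' k, c k := Summable.tsum_le_tsum (fun k => hg k θ) (hGsum θ).abs hcsum
  have hGNb : ∀ N θ, |∑ k ∈ Finset.range N, Real.log (derivFactor p w k θ)| ≤ C := by
    intro N θ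
    calc |∑ k ∈ Finset.range N, Real.log (derivFactor p w k θ)|
        ≤ ∑ k ∈ Finset.range N, |Real.log (derivFactor p w k θ)| :=
          Finset.abs_sum_le_sum_abs _ _
      _ ≤ ∑ k ∈ Finset.range N, c k := Finset.sum_le_sum (fun k _ => hg k θ)
      _ ≤ C := Summable.sum_le_tsum _ (fun k _ => hc0 k) hcsum
  set L : ℝ → ℝ := fun θ => Real.exp (G θ) with hL
  have hLpos : ∀ θ, 0 < L θ := fun θ => Real.exp_pos _
  have hprod_eq : ∀ N θ, ∏ k ∈ Finset.range N, derivFactor p w k θ =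
      Real.exp (∑ k ∈ Finset.range N, Real.log (derivFactor p w k θ)) := by
    intro N θ
    rw [Real.exp_sum]
    exact Finset.prod_congr rfl (fun k _ => (Real.exp_log (hFpos k θ)).symm)
  have hproduni : TendstoUniformly
      (fun N θ => ∏ k ∈ Finset.range N, derivFactor p w k θ) L atTop := by
    rw [Metric.tendstoUniformly_iff]
    intro ε hε
    have hC : (0:ℝ) < Real.exp C := Real.exp_pos C
    filter_upwards [Metric.tendstoUniformly_iff.mp hGuni (ε / Real.exp C) (by positivity)]
      with N hN θ
    have h1 := hN θ
    rw [Real.dist_eq] at h1 ⊢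
    rw [hprod_eq N θ]
    calc |L θ - Real.exp (∑ k ∈ Finset.range N, Real.log (derivFactor p w k θ))|
        ≤ Real.exp C * |G θ - ∑ k ∈ Finset.range N, Real.log (derivFactor p w k θ)| :=
          SLA.exp_dist_le (le_of_abs_le (hGb θ)) (le_of_abs_le (hGNb N θ))
      _ < Real.exp C * (ε / Real.exp C) := by
          exact mul_lt_mul_of_pos_left h1 hC
      _ = ε := by field_simp
  -- S side
  have hdS : ∀ k θ, ‖SigLift p w (k + 1) θ - SigLift p w k θ‖ ≤ c k := by
    intro k θ
    have h := SLA.phiLift_dist (p ⟨k + 1, k.succ_pos⟩) (w (p ⟨k + 1, k.succ_pos⟩)) (hw _)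
      (SigLift p w k θ)
    simpa [SigLift, Real.norm_eq_abs, hc] using h
  have hdSsum : ∀ θ, Summable fun k => SigLift p w (k + 1) θ - SigLift p w k θ := fun θ =>
    Summable.of_norm_bounded hcsum (fun k => hdS k θ)
  set S : ℝ → ℝ := fun θ => θ + ∑' k, (SigLift p w (k + 1) θ - SigLift p w k θ) with hS
  have hSpartial : ∀ N θ, SigLift p w N θ =
      θ + ∑ k ∈ Finset.range N, (SigLift p w (k + 1) θ - SigLift p w k θ) := by
    intro N θ
    rw [Finset.sum_range_sub (fun k => SigLift p w k θ)]
    simp [SigLift]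
  have hUS0 := tendstoUniformly_tsum_nat hcsum (fun k θ => hdS k θ)
  have hSuni : TendstoUniformly (fun N => SigLift p w N) S atTop := by
    rw [Metric.tendstoUniformly_iff]
    intro ε hε
    filter_upwards [Metric.tendstoUniformly_iff.mp hUS0 ε hε] with N hN θ
    have h1 := hN θ
    rw [Real.dist_eq] at h1 ⊢
    rw [hSpartial N θ, hS]
    simpa using h1
  have hSd : ∀ x, HasDerivAt S (L x) x :=
    hasDerivAt_of_tendstoUniformly hproduni
      (Eventually.of_forall (fun N x => SLA.sigLift_hasDerivAt p w hw N x))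
      (fun x => hSuni.tendsto_at x)
  -- continuity of L
  have hSLcont : ∀ N, Continuous (SigLift p w N) := by
    intro N
    rw [continuous_iff_continuousAt]
    exact fun x => (SLA.sigLift_hasDerivAt p w hw N x).continuousAt
  have hFcont : ∀ k, Continuous (fun θ => derivFactor p w k θ) := by
    intro k
    have hinner : Continuous (fun θ => (1 : ℂ) + w (p ⟨k + 1, k.succ_pos⟩) *
        Complex.exp ((((p ⟨k + 1, k.succ_pos⟩ : ℕ)) : ℂ) * ((SigLift p w k θ : ℝ) : ℂ) * Complex.I)) := by
      exact continuous_const.add (continuous_const.mul (Complex.continuous_exp.comp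
        ((continuous_const.mul (Complex.continuous_ofReal.comp (hSLcont k))).mul continuous_const)))
    refine continuous_const.div ((continuous_norm.comp hinner).pow 2) ?_
    intro θ
    exact (pow_pos (lt_of_lt_of_le (h1A k) (habs_lower k θ)) 2).ne'
  have hgcont : ∀ k, Continuous (fun θ => Real.log (derivFactor p w k θ)) := fun k =>
    (hFcont k).log (fun θ => (hFpos k θ).ne')
  have hGcont : Continuous G :=
    hGuni.continuous (Frequently.of_forall
      (fun N => continuous_finset_sum _ (fun k _ => hgcont k)))
  have hLcont : Continuous L := Real.continuous_exp.comp hGcont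
  have hderivS : deriv S = L := funext fun x => (hSd x).deriv
  have hSdiff : Differentiable ℝ S := fun x => (hSd x).differentiableAt
  have hSC1 : ContDiff ℝ 1 S := contDiff_one_iff_deriv.mpr ⟨hSdiff, by
    rw [hderivS]; exact hLcont⟩
  have hSmono : StrictMono S := strictMono_of_deriv_pos (fun x => by
    rw [hderivS]; exact hLpos x)
  have hSper : ∀ θ, S (θ + 2 * Real.pi) = S θ + 2 * Real.pi := by
    intro θ
    have hper : ∀ N, SigLift p w N (θ + 2 * Real.pi) = SigLift p w N θ + 2 * Real.pi := by
      intro N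
      induction N with
      | zero => simp [SigLift]
      | succ N ih => simp only [SigLift]; rw [ih, SLA.phiLift_periodic]
    have t1 := hSuni.tendsto_at (θ + 2 * Real.pi)
    have t2 : Tendsto (fun N => SigLift p w N (θ + 2 * Real.pi)) atTop
        (nhds (S θ + 2 * Real.pi)) := by
      simp_rw [hper]
      exact (hSuni.tendsto_at θ).add_const _
    exact tendsto_nhds_unique t1 t2
  have hSperZ : ∀ (m : ℤ) (θ : ℝ), S (θ + 2 * Real.pi * m) = S θ + 2 * Real.pi * m := by
    intro m
    induction m using Int.induction_on with
    | zero => simp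
    | succ n ih =>
      intro θ
      have h1 : θ + 2 * Real.pi * ((n : ℤ) + 1 : ℤ) = (θ + 2 * Real.pi * (n : ℤ)) + 2 * Real.pi := by
        push_cast; ring
      rw [h1, hSper, ih θ]
      push_cast; ring
    | pred n ih =>
      intro θ
      have hS2 : S (θ - 2 * Real.pi) = S θ - 2 * Real.pi := by
        have := hSper (θ - 2 * Real.pi)
        simp only [sub_add_cancel] at this
        linarith
      have h1 : θ + 2 * Real.pi * (-(n : ℤ) - 1 : ℤ) = (θ - 2 * Real.pi) + 2 * Real.pi * (-(n:ℤ) : ℤ) := by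
        push_cast; ring
      rw [h1, ih, hS2]
      push_cast; ring
  have hScont : Continuous S := hSdiff.continuous
  have hSsurj : Function.Surjective S := by
    intro y
    have hπ : (0:ℝ) < 2 * Real.pi := by positivity
    obtain ⟨a, ha⟩ := exists_int_lt ((y - S 0) / (2 * Real.pi))
    obtain ⟨b, hb⟩ := exists_int_gt ((y - S 0) / (2 * Real.pi))
    have hab : (a : ℝ) ≤ (b : ℝ) := (ha.trans hb).le
    have h1 : S (0 + 2 * Real.pi * a) ≤ y := by
      rw [hSperZ]
      have ha' : (a : ℝ) * (2 * Real.pi) < y - S 0 := (lt_div_iff₀ hπ).mp ha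
      linarith
    have h2 : y ≤ S (0 + 2 * Real.pi * b) := by
      rw [hSperZ]
      have hb' : y - S 0 < (b : ℝ) * (2 * Real.pi) := (div_lt_iff₀ hπ).mp hb
      linarith
    have hle : (0:ℝ) + 2 * Real.pi * (a:ℝ) ≤ 0 + 2 * Real.pi * (b:ℝ) := by nlinarith
    obtain ⟨θ, _, hθ⟩ := intermediate_value_Icc hle hScont.continuousOn ⟨h1, h2⟩
    exact ⟨θ, hθ⟩
  have hTS0 := StrictMono.orderIsoOfSurjective_symm_apply_self S hSmono hSsurj
  set T : ℝ → ℝ := fun y => (StrictMono.orderIsoOfSurjective S hSmono hSsurj).symm y with hT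
  have hTS : ∀ θ, T (S θ) = θ := fun θ => hTS0 θ
  have hST : ∀ y, S (T y) = y := by
    intro y
    have h1 := (StrictMono.orderIsoOfSurjective S hSmono hSsurj).apply_symm_apply y
    have h2 : ((StrictMono.orderIsoOfSurjective S hSmono hSsurj) : ℝ → ℝ) = S :=
      StrictMono.coe_orderIsoOfSurjective S hSmono hSsurj
    calc S (T y) = (StrictMono.orderIsoOfSurjective S hSmono hSsurj)
          ((StrictMono.orderIsoOfSurjective S hSmono hSsurj).symm y) :=
            (congrFun h2 ((StrictMono.orderIsoOfSurjective S hSmono hSsurj).symm y)).symm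
      _ = y := h1
  have hTcont : Continuous T := (StrictMono.orderIsoOfSurjective S hSmono hSsurj).symm.continuous
  have hTd : ∀ x, HasDerivAt T (L (T x))⁻¹ x := fun x =>
    HasDerivAt.of_local_left_inverse hTcont.continuousAt (hSd (T x)) (hLpos (T x)).ne'
      (Eventually.of_forall hST)
  have hTdiff : Differentiable ℝ T := fun x => (hTd x).differentiableAt
  have hTC1 : ContDiff ℝ 1 T := contDiff_one_iff_deriv.mpr ⟨hTdiff, by
    have h : deriv T = fun x => (L (T x))⁻¹ := funext fun x => (hTd x).deriv
    rw [h]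
    exact (hLcont.comp hTcont).inv₀ (fun x => (hLpos _).ne')⟩
  exact ⟨L, S, T, hLpos, hsummable2, hproduni, hSuni, hSC1,
    fun θ => by rw [hderivS], hSmono, hSper, hTS, hST, hTC1⟩
end

section
/- For every integer s ≥ 1 there exists a constant c = c(s) > 0, independent of n and w, such that for every integer n ≥ 1, every w ∈ ℂ with |w| < 1, and every θ ∈ ℝ, the s-th derivative of the function B_n(θ) = log((1 − |w|²)/|1 + w e^{inθ}|²) satisfies |B_n^{(s)}(θ)| ≤ c · n^s · |w| · (1 − |w|)^{−s}. -/
open Complex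

section AuxLemmas

lemma hasDerivAt_auxB (a b : ℂ) (θ : ℝ) :
    HasDerivAt (fun t : ℝ => a * Complex.exp (b * t)) (b * (a * Complex.exp (b * θ))) θ := by
  have h0 : HasDerivAt (fun t : ℝ => b * (t : ℂ)) b θ := by
    simpa using (Complex.ofRealCLM.hasDerivAt (x := θ)).const_mul b
  have := (h0.cexp).const_mul a
  exact this.congr_deriv (by ring)

lemma contDiff_auxB (a b : ℂ) : ContDiff ℝ ⊤ (fun t : ℝ => a * Complex.exp (b * t)) :=
  contDiff_const.mul ((contDiff_const.mul Complex.ofRealCLM.contDiff).cexp)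

lemma iteratedDeriv_auxB (a b : ℂ) (j : ℕ) :
    iteratedDeriv j (fun t : ℝ => a * Complex.exp (b * t))
      = fun t : ℝ => b ^ j * a * Complex.exp (b * t) := by
  induction j with
  | zero => simp
  | succ j ih =>
    rw [iteratedDeriv_succ, ih]
    funext θ
    rw [(hasDerivAt_auxB (b ^ j * a) b θ).deriv]
    ring

/-- The `k`-th term of the log series, as a complex function of `θ`. -/
noncomputable def gAux (n : ℕ) (w : ℂ) (k : ℕ) (t : ℝ) : ℂ :=
  ((-1 : ℂ) ^ (k + 1) * w ^ k / k) * Complex.exp ((((n * k : ℕ) : ℂ) * Complex.I) * t)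

/-- Its real part. -/
noncomputable def fAux (n : ℕ) (w : ℂ) (k : ℕ) (t : ℝ) : ℝ := (gAux n w k t).re

/-- Bound for the `j`-th derivative of `fAux n w k`. -/
noncomputable def vAux (n : ℕ) (w : ℂ) (j k : ℕ) : ℝ :=
  ((n * k : ℕ) : ℝ) ^ j * (‖w‖ ^ k / k)

lemma contDiff_gAux (n : ℕ) (w : ℂ) (k : ℕ) : ContDiff ℝ ⊤ (gAux n w k) :=
  contDiff_auxB _ _

lemma contDiff_fAux (n : ℕ) (w : ℂ) (k : ℕ) (N : ℕ∞) : ContDiff ℝ N (fAux n w k) :=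
  (Complex.reCLM.contDiff.comp ((contDiff_gAux n w k).of_le le_top))

lemma norm_iteratedFDeriv_fAux_le (n : ℕ) (w : ℂ) (j k : ℕ) (θ : ℝ) :
    ‖iteratedFDeriv ℝ j (fAux n w k) θ‖ ≤ vAux n w j k := by
  have h : fAux n w k = Complex.reCLM ∘ gAux n w k := rfl
  rw [h, Complex.reCLM.iteratedFDeriv_comp_left ((contDiff_gAux n w k).contDiffAt (x := θ)) (i := j) le_top]
  calc ‖Complex.reCLM.compContinuousMultilinearMap (iteratedFDeriv ℝ j (gAux n w k) θ)‖
      ≤ ‖Complex.reCLM‖ * ‖iteratedFDeriv ℝ j (gAux n w k) θ‖ :=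
        ContinuousLinearMap.norm_compContinuousMultilinearMap_le _ _
    _ ≤ ‖iteratedDeriv j (gAux n w k) θ‖ := by
        rw [Complex.reCLM_norm, one_mul, norm_iteratedFDeriv_eq_norm_iteratedDeriv]
    _ ≤ vAux n w j k := by
        unfold gAux
        rw [iteratedDeriv_auxB]
        simp only [norm_mul, norm_pow, norm_div, map_mul, map_pow,
          Complex.norm_natCast, Complex.norm_I, Complex.norm_exp]
        simp only [Complex.mul_re]
        unfold vAux
        simp [Complex.mul_re]

lemma summable_vAux (n : ℕ) (w : ℂ) (hw : ‖w‖ < 1) (j : ℕ) :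
    Summable (vAux n w j) := by
  have hxn : ‖‖w‖‖ < 1 := by
    rwa [Real.norm_eq_abs, _root_.abs_of_nonneg (norm_nonneg w)]
  apply Summable.of_nonneg_of_le (fun k => by unfold vAux; positivity) ?_
    ((summable_pow_mul_geometric_of_norm_lt_one j hxn).mul_left ((n : ℝ) ^ j))
  intro k
  unfold vAux
  cases k with
  | zero => simp; positivity
  | succ m =>
    have hm1 : (1 : ℝ) ≤ ((m + 1 : ℕ) : ℝ) := by exact_mod_cast Nat.succ_le_succ (Nat.zero_le m)
    have hdiv : ‖w‖ ^ (m + 1) / ((m + 1 : ℕ) : ℝ) ≤ ‖w‖ ^ (m + 1) :=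
      div_le_self (by positivity) hm1
    calc ((n * (m + 1) : ℕ) : ℝ) ^ j * (‖w‖ ^ (m + 1) / ((m + 1 : ℕ) : ℝ))
        ≤ ((n * (m + 1) : ℕ) : ℝ) ^ j * ‖w‖ ^ (m + 1) := by gcongr
      _ = (n : ℝ) ^ j * (((m + 1 : ℕ) : ℝ) ^ j * ‖w‖ ^ (m + 1)) := by
          rw [Nat.cast_mul, mul_pow]; ring

end AuxLemmas

/-- `B_n(θ) = log((1 − |w|²)/|1 + w e^{inθ}|²)`. -/
noncomputable def Bfun (n : ℕ) (w : ℂ) (θ : ℝ) : ℝ :=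
  Real.log ((1 - ‖w‖ ^ 2) /
    ‖1 + w * Complex.exp ((n : ℂ) * (θ : ℂ) * Complex.I)‖ ^ 2)

section Series

lemma abs_z_lt (n : ℕ) (w : ℂ) (hw : ‖w‖ < 1) (t : ℝ) :
    ‖w * Complex.exp ((n : ℂ) * (t : ℂ) * Complex.I)‖ < 1 := by
  rw [norm_mul, Complex.norm_exp]
  have h0 : (((n : ℂ) * (t : ℂ) * Complex.I).re) = 0 := by simp
  rw [h0, Real.exp_zero, mul_one]
  exact hw

lemma one_add_ne (n : ℕ) (w : ℂ) (hw : ‖w‖ < 1) (t : ℝ) :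
    (1 : ℂ) + w * Complex.exp ((n : ℂ) * (t : ℂ) * Complex.I) ≠ 0 := by
  intro h
  have h2 : w * Complex.exp ((n : ℂ) * (t : ℂ) * Complex.I) = -1 := by linear_combination h
  have h3 := abs_z_lt n w hw t
  rw [h2] at h3
  simp at h3

lemma hasSum_fAux (n : ℕ) (w : ℂ) (hw : ‖w‖ < 1) (t : ℝ) :
    HasSum (fun k : ℕ => fAux n w k t)
      ((Complex.log (1 + w * Complex.exp ((n : ℂ) * (t : ℂ) * Complex.I))).re) := by
  have h0 := (hasSum_taylorSeries_log (z := w * Complex.exp ((n : ℂ) * (t : ℂ) * Complex.I))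
      (by exact abs_z_lt n w hw t)).mapL Complex.reCLM
  convert h0 using 2 with k
  simp only [Complex.reCLM_apply]
  unfold fAux gAux
  congr 1
  rw [mul_pow, ← Complex.exp_nat_mul]
  push_cast
  ring_nf
  rfl

lemma Bfun_eq (n : ℕ) (w : ℂ) (hw : ‖w‖ < 1) :
    Bfun n w = fun t =>
      Real.log (1 - ‖w‖ ^ 2) + (-2 : ℝ) * ∑' k, fAux n w k t := by
  funext t
  have h1x : (0 : ℝ) < 1 - ‖w‖ ^ 2 := by nlinarith [norm_nonneg w]
  have hApos : 0 < ‖1 + w * Complex.exp ((n : ℂ) * (t : ℂ) * Complex.I)‖ :=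
    norm_pos_iff.mpr (one_add_ne n w hw t)
  unfold Bfun
  rw [Real.log_div h1x.ne' (pow_ne_zero 2 hApos.ne'), Real.log_pow,
    (hasSum_fAux n w hw t).tsum_eq, ← Complex.log_re]
  push_cast
  ring

end Series

lemma tsum_vAux_le (s : ℕ) (hs : 1 ≤ s) (n : ℕ) (w : ℂ) (hw : ‖w‖ < 1) :
    ∑' k, vAux n w s k ≤
      ((s - 1).factorial : ℝ) *
        ((n : ℝ) ^ s * ‖w‖ * ((1 - ‖w‖) ^ s)⁻¹) := by
  obtain ⟨t, rfl⟩ : ∃ t, s = t + 1 := ⟨s - 1, (Nat.succ_pred_eq_of_pos hs).symm⟩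
  simp only [Nat.add_sub_cancel]
  set x : ℝ := ‖w‖ with hxdef
  have hx0 : 0 ≤ x := norm_nonneg w
  have hxn : ‖x‖ < 1 := by rwa [Real.norm_eq_abs, _root_.abs_of_nonneg hx0]
  have hsum := summable_vAux n w hw (t + 1)
  rw [hsum.tsum_eq_zero_add]
  have hv0 : vAux n w (t + 1) 0 = 0 := by simp [vAux]
  rw [hv0, zero_add]
  have hsummL : Summable (fun m => vAux n w (t + 1) (m + 1)) :=
    (summable_nat_add_iff 1).2 hsum
  have hsummR : Summable (fun m : ℕ =>
      ((t.factorial : ℝ) * ((n : ℝ) ^ (t + 1) * x)) * (((m + t).choose t : ℝ) * x ^ m)) :=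
    (summable_choose_mul_geometric_of_norm_lt_one t hxn).mul_left _
  have hterm : ∀ m : ℕ, vAux n w (t + 1) (m + 1) ≤
      ((t.factorial : ℝ) * ((n : ℝ) ^ (t + 1) * x)) * (((m + t).choose t : ℝ) * x ^ m) := by
    intro m
    have hnat : (m + 1) ^ t ≤ t.factorial * (m + t).choose t := by
      calc (m + 1) ^ t ≤ (m + 1).ascFactorial t := Nat.pow_succ_le_ascFactorial _ _
        _ = t.factorial * (m + t).choose t := Nat.ascFactorial_eq_factorial_mul_choose _ _
    have hm0 : ((m + 1 : ℕ) : ℝ) ≠ 0 := by positivity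
    have heq : vAux n w (t + 1) (m + 1)
        = (n : ℝ) ^ (t + 1) * x * (((m + 1 : ℕ) : ℝ) ^ t * x ^ m) := by
      unfold vAux
      rw [Nat.cast_mul, mul_pow]
      field_simp
      ring
    rw [heq]
    calc (n : ℝ) ^ (t + 1) * x * (((m + 1 : ℕ) : ℝ) ^ t * x ^ m)
        ≤ (n : ℝ) ^ (t + 1) * x * (((t.factorial * (m + t).choose t : ℕ) : ℝ) * x ^ m) := by
          gcongr
          exact_mod_cast hnat
      _ = ((t.factorial : ℝ) * ((n : ℝ) ^ (t + 1) * x)) * (((m + t).choose t : ℝ) * x ^ m) := by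
          push_cast; ring
  calc ∑' m, vAux n w (t + 1) (m + 1)
      ≤ ∑' m : ℕ, ((t.factorial : ℝ) * ((n : ℝ) ^ (t + 1) * x)) *
          (((m + t).choose t : ℝ) * x ^ m) := Summable.tsum_le_tsum hterm hsummL hsummR
    _ = ((t.factorial : ℝ) * ((n : ℝ) ^ (t + 1) * x)) * (1 / (1 - x) ^ (t + 1)) := by
        rw [tsum_mul_left, tsum_choose_mul_geometric_of_norm_lt_one t hxn]
    _ = (t.factorial : ℝ) * ((n : ℝ) ^ (t + 1) * x * ((1 - x) ^ (t + 1))⁻¹) := by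
        rw [one_div]; ring

/-- For every `s ≥ 1` there is a constant `c = c(s) > 0`, independent of `n` and `w`, such
that for every `n ≥ 1`, every `|w| < 1` and every `θ`,
`|B_n^{(s)}(θ)| ≤ c · n^s · |w| · (1 − |w|)^{−s}`. -/
theorem iteratedDeriv_Bfun_bound (s : ℕ) (hs : 1 ≤ s) :
    ∃ c : ℝ, 0 < c ∧ ∀ n : ℕ, 1 ≤ n → ∀ w : ℂ, ‖w‖ < 1 → ∀ θ : ℝ,
      |iteratedDeriv s (Bfun n w) θ| ≤
        c * (n : ℝ) ^ s * ‖w‖ * ((1 - ‖w‖) ^ s)⁻¹ := by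
  have hfacpos : (0 : ℝ) < ((s - 1).factorial : ℝ) := by exact_mod_cast (s - 1).factorial_pos
  refine ⟨2 * ((s - 1).factorial : ℝ), by linarith, fun n _hn w hw θ => ?_⟩
  set x : ℝ := ‖w‖ with hxdef
  have hx0 : 0 ≤ x := norm_nonneg w
  -- smoothness of the series
  have hfc : ∀ k, ContDiff ℝ (s : ℕ∞) (fAux n w k) := fun k => contDiff_fAux n w k s
  have hv' : ∀ j : ℕ, (j : ℕ∞) ≤ (s : ℕ∞) → Summable (vAux n w j) :=
    fun j _ => summable_vAux n w hw j
  have h'f : ∀ (j : ℕ) (k : ℕ) (y : ℝ), (j : ℕ∞) ≤ (s : ℕ∞) →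
      ‖iteratedFDeriv ℝ j (fAux n w k) y‖ ≤ vAux n w j k :=
    fun j k y _ => norm_iteratedFDeriv_fAux_le n w j k y
  have hF : ContDiff ℝ (s : ℕ∞) (fun t : ℝ => ∑' k, fAux n w k t) :=
    contDiff_tsum hfc hv' h'f
  -- rewrite the iterated derivative
  rw [Bfun_eq n w hw, ← iteratedDerivWithin_univ,
    iteratedDerivWithin_const_add
      (by omega : 0 < s) (Real.log (1 - ‖w‖ ^ 2)),
    iteratedDerivWithin_const_mul (Set.mem_univ θ) uniqueDiffOn_univ (-2 : ℝ) hF.contDiffWithinAt,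
    iteratedDerivWithin_univ]
  -- bound the sum of derivatives
  have key : |iteratedDeriv s (fun t : ℝ => ∑' k, fAux n w k t) θ| ≤ ∑' k, vAux n w s k := by
    rw [← Real.norm_eq_abs, ← norm_iteratedFDeriv_eq_norm_iteratedDeriv,
      iteratedFDeriv_tsum_apply hfc hv' h'f (le_refl (s : ℕ∞)) θ]
    exact tsum_of_norm_bounded (summable_vAux n w hw s).hasSum
      (fun k => norm_iteratedFDeriv_fAux_le n w s k θ)
  have hT := tsum_vAux_le s hs n w hw
  rw [abs_mul]
  have habs2 : |(-2 : ℝ)| = 2 := by norm_num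
  rw [habs2]
  calc 2 * |iteratedDeriv s (fun t : ℝ => ∑' k, fAux n w k t) θ|
      ≤ 2 * ∑' k, vAux n w s k := by linarith
    _ ≤ 2 * (((s - 1).factorial : ℝ) * ((n : ℝ) ^ s * x * ((1 - x) ^ s)⁻¹)) := by linarith
    _ = 2 * ((s - 1).factorial : ℝ) * (n : ℝ) ^ s * x * ((1 - x) ^ s)⁻¹ := by ring
end

section
/- Let P and Q be coprime complex polynomials with Q(z) ≠ 0 for every z with |z| = 1, and suppose that the map z ↦ P(z)/Q(z) restricts to a bijection of the unit circle S¹ onto itself. Then max(deg P, deg Q) is odd. (The degree of a rational homeomorphism of S¹, as a map of the Riemann sphere, is odd.) -/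
open Polynomial

lemma eval_reflect' {f : ℂ[X]} {N : ℕ} (hf : f.natDegree ≤ N) {z : ℂ} (hz : z ≠ 0) :
    (f.reflect N).eval z = z ^ N * f.eval z⁻¹ := by
  have : Invertible (z⁻¹) := invertibleOfNonzero (inv_ne_zero hz)
  have h := Polynomial.eval₂_reflect_mul_pow (RingHom.id ℂ) z⁻¹ N f hf
  rw [invOf_eq_inv, inv_inv] at h
  change eval z (reflect N f) * z⁻¹ ^ N = eval z⁻¹ f at h
  rw [← h, inv_pow, mul_comm, mul_assoc, inv_mul_cancel₀ (pow_ne_zero _ hz), mul_one]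


lemma reflect_sub' (f g : ℂ[X]) (N : ℕ) :
    Polynomial.reflect N (f - g) = Polynomial.reflect N f - Polynomial.reflect N g := by
  ext i
  simp [Polynomial.coeff_reflect]

lemma sphere_infinite : (Metric.sphere (0:ℂ) 1).Infinite := by
  have h1 : IsPreconnected (Metric.sphere (0:ℂ) 1) := by
    refine (isConnected_sphere ?_ 0 zero_le_one).isPreconnected
    rw [Complex.rank_real_complex]
    norm_num
  refine h1.infinite_of_nontrivial ⟨1, by simp, -1, by simp, by norm_num⟩

lemma even_card_invol {s : Finset ℂ} (g : ℂ → ℂ) (hmem : ∀ a ∈ s, g a ∈ s)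
    (hinv : ∀ a ∈ s, g (g a) = a) (hne : ∀ a ∈ s, g a ≠ a) : Even s.card := by
  have h : (∑ _x ∈ s, (1 : ZMod 2)) = 0 :=
    Finset.sum_involution (fun a _ => g a) (fun a ha => by decide)
      (fun a ha _ => hne a ha) (fun a ha => hmem a ha) (fun a ha => hinv a ha)
  rw [Finset.sum_const, nsmul_eq_mul, mul_one] at h
  rw [Nat.even_iff, ← Nat.dvd_iff_mod_eq_zero]
  exact (ZMod.natCast_eq_zero_iff _ 2).mp h

/-- The degree of a rational homeomorphism of the circle, as a map of the Riemann sphere,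
is odd: if `P, Q` are coprime, `Q` has no zeros on `S¹`, and `z ↦ P(z)/Q(z)` restricts to
a bijection of `S¹` onto itself, then `max(deg P, deg Q)` is odd. -/
theorem rational_circle_homeo_odd_degree (P Q : Polynomial ℂ) (hcop : IsCoprime P Q)
    (hQ : ∀ z : ℂ, ‖z‖ = 1 → Q.eval z ≠ 0)
    (hbij : Set.BijOn (fun z => P.eval z / Q.eval z)
      (Metric.sphere (0 : ℂ) 1) (Metric.sphere (0 : ℂ) 1)) :
    Odd (max P.natDegree Q.natDegree) := by
  classical
  set d := max P.natDegree Q.natDegree with hd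
  have hsmem : ∀ z : ℂ, z ∈ Metric.sphere (0:ℂ) 1 ↔ ‖z‖ = 1 := by
    intro z; rw [mem_sphere_zero_iff_norm]
  -- abs equality on circle
  have habs : ∀ z : ℂ, ‖z‖ = 1 →
      ‖P.eval z‖ = ‖Q.eval z‖ := by
    intro z hz
    have h1 := hbij.mapsTo ((hsmem z).2 hz)
    rw [hsmem, norm_div, div_eq_one_iff_eq (norm_ne_zero_iff.mpr (hQ z hz))] at h1
    exact h1
  have hPne : ∀ z : ℂ, ‖z‖ = 1 → P.eval z ≠ 0 := by
    intro z hz h0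
    have := habs z hz
    rw [h0, norm_zero] at this
    exact hQ z hz (norm_eq_zero.1 this.symm)
  have hQ0 : Q ≠ 0 := fun h => hQ 1 (by simp) (by simp [h])
  have hP0 : P ≠ 0 := fun h => hPne 1 (by simp) (by simp [h])
  -- the reflected conjugate
  set τ : ℂ[X] → ℂ[X] := fun f => (f.map (starRingEnd ℂ)).reflect d with hτ
  have hτeval : ∀ (f : ℂ[X]), f.natDegree ≤ d → ∀ z : ℂ, z ≠ 0 →
      (τ f).eval z = z ^ d * (starRingEnd ℂ) (f.eval (((starRingEnd ℂ) z)⁻¹)) := by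
    intro f hfd z hz
    have hmd : (f.map (starRingEnd ℂ)).natDegree ≤ d := le_trans natDegree_map_le hfd
    rw [hτ]
    rw [eval_reflect' hmd hz, eval_map]
    congr 1
    have : z⁻¹ = (starRingEnd ℂ) (((starRingEnd ℂ) z)⁻¹) := by
      rw [map_inv₀, Complex.conj_conj]
    rw [this, eval₂_hom]

  have hPd : P.natDegree ≤ d := le_max_left _ _
  have hQd : Q.natDegree ≤ d := le_max_right _ _
  have hkey : P * τ P = Q * τ Q := by
    rw [← sub_eq_zero]
    apply Polynomial.eq_zero_of_infinite_isRoot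
    apply Set.Infinite.mono ?_ sphere_infinite
    intro z hz
    have hz1 : ‖z‖ = 1 := (hsmem z).1 hz
    have hz0 : z ≠ 0 := by
      intro h; rw [h] at hz1; simp at hz1
    have hzc : ((starRingEnd ℂ) z)⁻¹ = z := by
      rw [← Complex.inv_eq_conj hz1, inv_inv]
    simp only [Set.mem_setOf_eq, IsRoot, eval_sub, eval_mul]
    rw [hτeval P hPd z hz0, hτeval Q hQd z hz0, hzc]
    have key : ∀ a : ℂ, a * (z ^ d * (starRingEnd ℂ) a) = z ^ d * (Complex.normSq a : ℂ) := by
      intro a; rw [← Complex.mul_conj]; ring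
    rw [key, key, sub_eq_zero]
    have : Complex.normSq (P.eval z) = Complex.normSq (Q.eval z) := by
      rw [← Complex.sq_norm, ← Complex.sq_norm, habs z hz1]
    rw [this]
  -- divisibility
  have hdvd : Q ∣ τ P := by
    refine (hcop.symm.dvd_of_dvd_mul_left ⟨τ Q, ?_⟩)
    rw [← hkey]
  obtain ⟨u, hu⟩ := hdvd
  have huQ : τ Q = P * u := by
    have h2 : Q * (P * u) = Q * τ Q := by rw [← hkey, hu]; ring
    exact (mul_left_cancel₀ hQ0 h2).symm
  have hτP0 : τ P ≠ 0 := by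
    show (P.map (starRingEnd ℂ)).reflect d ≠ 0
    rw [Ne, reflect_eq_zero_iff]
    exact Polynomial.map_ne_zero hP0
  have hu0 : u ≠ 0 := fun h => hτP0 (by rw [hu, h, mul_zero])
  have hcoeff0 : ∀ f : ℂ[X], (τ f).coeff 0 = (starRingEnd ℂ) (f.coeff d) := by
    intro f
    show ((f.map (starRingEnd ℂ)).reflect d).coeff 0 = _
    rw [coeff_reflect, revAt_le (Nat.zero_le d), Nat.sub_zero, coeff_map]
  have hund : u.natDegree = 0 := by
    by_contra hne
    have hdeg : u.degree ≠ 0 := by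
      intro h
      exact hne (natDegree_eq_zero_iff_degree_le_zero.2 (le_of_eq h))
    obtain ⟨z₀, hz₀⟩ := IsAlgClosed.exists_root u hdeg
    have hrP : (τ P).eval z₀ = 0 := by rw [hu, eval_mul, hz₀.eq_zero, mul_zero]
    have hrQ : (τ Q).eval z₀ = 0 := by rw [huQ, eval_mul, hz₀.eq_zero, mul_zero]
    rcases eq_or_ne z₀ 0 with rfl | hz₀0
    · rw [← coeff_zero_eq_eval_zero, hcoeff0, _root_.map_eq_zero] at hrP hrQ
      rcases le_total P.natDegree Q.natDegree with h | h
      · have : d = Q.natDegree := max_eq_right h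
        rw [this] at hrQ
        exact Polynomial.leadingCoeff_ne_zero.2 hQ0 hrQ
      · have : d = P.natDegree := max_eq_left h
        rw [this] at hrP
        exact Polynomial.leadingCoeff_ne_zero.2 hP0 hrP
    · rw [hτeval P hPd z₀ hz₀0] at hrP
      rw [hτeval Q hQd z₀ hz₀0] at hrQ
      have hP' : P.eval (((starRingEnd ℂ) z₀)⁻¹) = 0 := by
        rcases mul_eq_zero.1 hrP with h | h
        · exact absurd h (pow_ne_zero _ hz₀0)
        · exact (_root_.map_eq_zero _).1 h
      have hQ' : Q.eval (((starRingEnd ℂ) z₀)⁻¹) = 0 := by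
        rcases mul_eq_zero.1 hrQ with h | h
        · exact absurd h (pow_ne_zero _ hz₀0)
        · exact (_root_.map_eq_zero _).1 h
      obtain ⟨a, b, hab⟩ := hcop
      have := congrArg (Polynomial.eval (((starRingEnd ℂ) z₀)⁻¹)) hab
      simp [hP', hQ'] at this
  set c := u.coeff 0 with hcdef
  have huC : u = C c := eq_C_of_natDegree_eq_zero hund
  have hc0 : c ≠ 0 := by
    intro h; rw [h, map_zero] at huC; exact hu0 huC

  -- nonconstancy
  have hnonconst : ∀ k : ℂ, ¬ (∀ z ∈ Metric.sphere (0:ℂ) 1, P.eval z / Q.eval z = k) := by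
    intro k hk
    obtain ⟨z₁, hz₁, hfz₁⟩ := hbij.surjOn (by simp : (1:ℂ) ∈ Metric.sphere (0:ℂ) 1)
    obtain ⟨z₂, hz₂, hfz₂⟩ := hbij.surjOn (by simp [hsmem] : (-1:ℂ) ∈ Metric.sphere (0:ℂ) 1)
    have e1 : k = (1:ℂ) := by rw [← hfz₁]; exact (hk z₁ hz₁).symm
    have e2 : k = (-1:ℂ) := by rw [← hfz₂]; exact (hk z₂ hz₂).symm
    rw [e1] at e2
    norm_num at e2
  have hd0 : 0 < d := by
    rcases Nat.eq_zero_or_pos d with h0 | h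
    · exfalso
      have hp0 : P.natDegree = 0 := Nat.le_zero.mp (h0 ▸ hPd)
      have hq0 : Q.natDegree = 0 := Nat.le_zero.mp (h0 ▸ hQd)
      apply hnonconst (P.coeff 0 / Q.coeff 0)
      intro z _
      rw [eq_C_of_natDegree_eq_zero hp0, eq_C_of_natDegree_eq_zero hq0]
      simp
    · exact h
  -- the wronskian
  set W := derivative P * Q - P * derivative Q with hW
  have hW0 : W ≠ 0 := by
    intro h
    have h1 : derivative P * Q = P * derivative Q := by
      rw [← sub_eq_zero]; rw [hW] at h; exact h
    have hPdvd : P ∣ derivative P := by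
      refine hcop.dvd_of_dvd_mul_right ⟨derivative Q, ?_⟩
      linear_combination h1
    have hQdvd : Q ∣ derivative Q := by
      refine hcop.symm.dvd_of_dvd_mul_right ⟨derivative P, ?_⟩
      linear_combination -h1
    have hP'0 : derivative P = 0 := by
      by_contra hne
      have hle := Polynomial.natDegree_le_of_dvd hPdvd hne
      have hnd : P.natDegree ≠ 0 := by
        intro h0
        have : derivative P = derivative (C (P.coeff 0)) := by
          rw [← eq_C_of_natDegree_eq_zero h0]
        rw [this, derivative_C] at hne
        exact hne rfl
      exact absurd hle (not_le.2 (Polynomial.natDegree_derivative_lt hnd))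
    have hQ'0 : derivative Q = 0 := by
      by_contra hne
      have hle := Polynomial.natDegree_le_of_dvd hQdvd hne
      have hnd : Q.natDegree ≠ 0 := by
        intro h0
        have : derivative Q = derivative (C (Q.coeff 0)) := by
          rw [← eq_C_of_natDegree_eq_zero h0]
        rw [this, derivative_C] at hne
        exact hne rfl
      exact absurd hle (not_le.2 (Polynomial.natDegree_derivative_lt hnd))
    have hp0 : P.natDegree = 0 := natDegree_eq_zero_of_derivative_eq_zero hP'0
    have hq0 : Q.natDegree = 0 := natDegree_eq_zero_of_derivative_eq_zero hQ'0
    rw [hd, hp0, hq0] at hd0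
    simp at hd0
  -- choose a good point w on the circle
  have hbadfin : (↑(W.roots.toFinset.image (fun z => P.eval z / Q.eval z)) : Set ℂ).Finite :=
    Finset.finite_toSet _
  obtain ⟨w, hws, hwb⟩ := (sphere_infinite.diff hbadfin).nonempty
  have hw1 : ‖w‖ = 1 := (hsmem w).1 hws
  have hw0 : w ≠ 0 := by
    intro h; rw [h] at hw1; simp at hw1
  have hwc : (starRingEnd ℂ) w * w = 1 := by
    rw [mul_comm, Complex.mul_conj]
    norm_cast
    rw [← Complex.sq_norm, hw1]; norm_num
  set R := P - C w * Q with hR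
  have hRd : R.natDegree ≤ d :=
    le_trans (natDegree_sub_le _ _) (max_le hPd (le_trans (natDegree_C_mul_le _ _) hQd))
  have hR0 : R ≠ 0 := by
    intro h
    apply hnonconst w
    intro z hz
    have hz1 := (hsmem z).1 hz
    have hPz : P.eval z = w * Q.eval z := by
      have h2 := congrArg (Polynomial.eval z) h
      rw [hR] at h2
      simp only [eval_sub, eval_mul, eval_C, eval_zero, sub_eq_zero] at h2
      exact h2
    rw [hPz, mul_div_assoc, div_self (hQ z hz1), mul_one]
  -- the functional equation for R
  have hRt : τ R = C (-(c * (starRingEnd ℂ) w)) * R := by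
    show (R.map (starRingEnd ℂ)).reflect d = _
    have hmap : R.map (starRingEnd ℂ)
        = P.map (starRingEnd ℂ) - C ((starRingEnd ℂ) w) * Q.map (starRingEnd ℂ) := by
      rw [hR]
      simp [Polynomial.map_sub, Polynomial.map_mul, Polynomial.map_C]
    have hCw : (C ((starRingEnd ℂ) w) : ℂ[X]) * C w = 1 := by
      rw [← C_mul, hwc, C_1]
    rw [hmap, reflect_sub', reflect_C_mul]
    show τ P - C ((starRingEnd ℂ) w) * τ Q = _
    rw [hu, huQ, huC, hR, map_neg, C_mul]
    linear_combination (-(C c * Q)) * hCw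
  set ε := -(c * (starRingEnd ℂ) w) with hε
  have hε0 : ε ≠ 0 := by
    simp only [hε, neg_ne_zero, mul_ne_zero_iff]
    exact ⟨hc0, by simp [hw0]⟩
  have hcoefs : ∀ j, j ≤ d → (starRingEnd ℂ) (R.coeff (d - j)) = ε * R.coeff j := by
    intro j hj
    have h1 := congrArg (fun p : ℂ[X] => p.coeff j) hRt
    simp only [coeff_C_mul] at h1
    have h2 : (τ R).coeff j = (starRingEnd ℂ) (R.coeff (d - j)) := by
      show ((R.map (starRingEnd ℂ)).reflect d).coeff j = _
      rw [coeff_reflect, revAt_le hj, coeff_map]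
    rw [h2] at h1
    exact h1
  -- root symmetry
  have hsym : ∀ α : ℂ, α ≠ 0 → R.eval α = 0 → R.eval (((starRingEnd ℂ) α)⁻¹) = 0 := by
    intro α hα h0
    have hαc : ((starRingEnd ℂ) α)⁻¹ ≠ 0 := by simp [hα]
    have hev := hτeval R hRd _ hαc
    have harg : ((starRingEnd ℂ) (((starRingEnd ℂ) α)⁻¹))⁻¹ = α := by
      rw [map_inv₀, Complex.conj_conj, inv_inv]
    rw [hRt, harg, h0, map_zero, mul_zero, eval_mul, eval_C] at hev
    rcases mul_eq_zero.1 hev with h | h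
    · exact absurd h hε0
    · exact h
  -- roots of R are simple
  have hsimple : ∀ z : ℂ, R.eval z = 0 → (derivative R).eval z ≠ 0 := by
    intro z h0 h1
    have hQz : Q.eval z ≠ 0 := by
      intro hq
      have hp : P.eval z = 0 := by
        rw [hR] at h0
        simp only [eval_sub, eval_mul, eval_C, hq, mul_zero, sub_zero] at h0
        exact h0
      obtain ⟨a, b, hab⟩ := hcop
      have h3 := congrArg (Polynomial.eval z) hab
      simp [hp, hq] at h3
    have hPz : P.eval z = w * Q.eval z := by
      rw [hR] at h0
      simp only [eval_sub, eval_mul, eval_C, sub_eq_zero] at h0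
      exact h0
    have hP'z : (derivative P).eval z = w * (derivative Q).eval z := by
      rw [hR] at h1
      rw [derivative_sub, derivative_C_mul] at h1
      simp only [eval_sub, eval_mul, eval_C, sub_eq_zero] at h1
      exact h1
    have hWz : W.eval z = 0 := by
      rw [hW]
      simp only [eval_sub, eval_mul, hPz, hP'z]
      ring
    apply hwb
    rw [Finset.coe_image, Set.mem_image]
    refine ⟨z, ?_, ?_⟩
    · rw [Finset.mem_coe, Multiset.mem_toFinset, Polynomial.mem_roots']
      exact ⟨hW0, hWz⟩
    · rw [hPz, mul_div_assoc, div_self hQz, mul_one]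
  -- R is separable
  have hsep : IsCoprime R (derivative R) := by
    by_contra hnc
    have hgu : ¬ IsUnit (EuclideanDomain.gcd R (derivative R)) :=
      fun h => hnc (EuclideanDomain.gcd_isUnit_iff.mp h)
    have hg0 : EuclideanDomain.gcd R (derivative R) ≠ 0 := by
      intro h
      exact hR0 ((EuclideanDomain.gcd_eq_zero_iff.mp h).1)
    have hgd : (EuclideanDomain.gcd R (derivative R)).degree ≠ 0 := by
      intro h
      exact hgu (Polynomial.isUnit_iff_degree_eq_zero.2 h)
    obtain ⟨z, hz⟩ := IsAlgClosed.exists_root _ hgd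
    obtain ⟨t1, ht1⟩ := EuclideanDomain.gcd_dvd_left R (derivative R)
    obtain ⟨t2, ht2⟩ := EuclideanDomain.gcd_dvd_right R (derivative R)
    have h1 : R.eval z = 0 := by rw [ht1, eval_mul, hz.eq_zero, zero_mul]
    have h2 : (derivative R).eval z = 0 := by rw [ht2, eval_mul, hz.eq_zero, zero_mul]
    exact hsimple z h1 h2
  have hnodup : R.roots.Nodup := Polynomial.nodup_roots ((Polynomial.separable_def R).mpr hsep)
  have hcard : R.roots.card = R.natDegree := by
    have hsp : R.Splits := IsAlgClosed.splits R
    have h3 := hsp.natDegree_eq_card_roots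
    exact h3.symm
  set s := R.roots.toFinset with hs
  have hscard : s.card = R.natDegree := by
    rw [hs, Multiset.toFinset_card_of_nodup hnodup, hcard]
  have hmem_s : ∀ α, α ∈ s ↔ R.eval α = 0 := by
    intro α
    rw [hs, Multiset.mem_toFinset, Polynomial.mem_roots']
    exact ⟨fun h => h.2, fun h => ⟨hR0, h⟩⟩
  -- the unique circle root
  obtain ⟨z₀, hz₀s, hz₀w⟩ := hbij.surjOn hws
  have hz₀1 : ‖z₀‖ = 1 := (hsmem z₀).1 hz₀s
  have hcirc_iff : ∀ α, ‖α‖ = 1 → (R.eval α = 0 ↔ α = z₀) := by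
    intro α hα
    constructor
    · intro h0
      have hQα := hQ α hα
      have hfα : P.eval α / Q.eval α = w := by
        rw [hR] at h0
        simp only [eval_sub, eval_mul, eval_C, sub_eq_zero] at h0
        rw [h0, mul_div_assoc, div_self hQα, mul_one]
      exact hbij.injOn ((hsmem α).2 hα) hz₀s (hfα.trans hz₀w.symm)
    · rintro rfl
      have hQz := hQ α hα
      rw [hR]
      simp only [eval_sub, eval_mul, eval_C, sub_eq_zero]
      have hfz : P.eval α / Q.eval α = w := hz₀w
      rw [div_eq_iff hQz] at hfz
      exact hfz
  have hz₀mem : z₀ ∈ s := (hmem_s z₀).2 ((hcirc_iff z₀ hz₀1).2 rfl)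
  have hsC : s.filter (fun α => ‖α‖ = 1) = {z₀} := by
    ext α
    simp only [Finset.mem_filter, Finset.mem_singleton]
    constructor
    · rintro ⟨hαs, hα1⟩; exact (hcirc_iff α hα1).1 ((hmem_s α).1 hαs)
    · rintro rfl; exact ⟨hz₀mem, hz₀1⟩
  -- even number of off-circle nonzero roots
  set t := (s.filter (fun α => ¬ ‖α‖ = 1)) with ht
  have hsO : Even ((t.filter (fun α => ¬ α = 0)).card) := by
    apply even_card_invol (fun α => ((starRingEnd ℂ) α)⁻¹)
    · intro a ha
      simp only [ht, Finset.mem_filter] at ha ⊢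
      obtain ⟨⟨has, ha1⟩, ha0⟩ := ha
      have h1 : ((starRingEnd ℂ) a)⁻¹ ≠ 0 := by simp [ha0]
      refine ⟨⟨(hmem_s _).2 (hsym a ha0 ((hmem_s a).1 has)), ?_⟩, h1⟩
      rw [norm_inv, Complex.norm_conj]
      intro h
      exact ha1 (by rwa [inv_eq_one] at h)
    · intro a _
      rw [map_inv₀, Complex.conj_conj, inv_inv]
    · intro a ha
      simp only [ht, Finset.mem_filter] at ha
      obtain ⟨⟨has, ha1⟩, ha0⟩ := ha
      intro h
      apply ha1
      have h4 := congrArg (‖·‖) h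
      rw [norm_inv, Complex.norm_conj] at h4
      have hpos : 0 < ‖a‖ := by
        rw [norm_pos_iff]
        exact ha0
      have h5 := congrArg (· * ‖a‖) h4
      simp only [inv_mul_cancel₀ (ne_of_gt hpos)] at h5
      nlinarith [hpos]
  -- coefficient at d vs coefficient at 0
  have hc0d : (starRingEnd ℂ) (R.coeff d) = ε * R.coeff 0 := by
    have h6 := hcoefs 0 (Nat.zero_le d)
    rwa [Nat.sub_zero] at h6
  have hsplitA : ((s.filter (fun α => ‖α‖ = 1)).card
      + (s.filter (fun α => ¬ ‖α‖ = 1)).card) = s.card :=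
    Finset.card_filter_add_card_filter_not _
  have hsplitB : ((t.filter (fun α => α = 0)).card
      + (t.filter (fun α => ¬ α = 0)).card) = t.card :=
    Finset.card_filter_add_card_filter_not _
  obtain ⟨k, hk⟩ := hsO
  rcases eq_or_ne (R.coeff d) 0 with hcd | hcd
  · -- coeff at d vanishes : 0 is a (simple) root and natDegree R = d - 1
    have hc00 : R.coeff 0 = 0 := by
      rw [hcd, map_zero] at hc0d
      rcases mul_eq_zero.1 hc0d.symm with h | h
      · exact absurd h hε0
      · exact h
    have h0root : R.eval 0 = 0 := by rw [← coeff_zero_eq_eval_zero, hc00]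
    have hc1 : R.coeff 1 ≠ 0 := by
      intro h
      apply hsimple 0 h0root
      rw [← coeff_zero_eq_eval_zero, coeff_derivative, h]
      simp
    have hdeg1 : R.natDegree = d - 1 := by
      have hndne : R.natDegree ≠ d := by
        intro h
        apply Polynomial.leadingCoeff_ne_zero.2 hR0
        rw [Polynomial.leadingCoeff, h]
        exact hcd
      have hlt : R.natDegree < d := lt_of_le_of_ne hRd hndne
      have hne : R.coeff (d-1) ≠ 0 := by
        intro h
        have h7 := hcoefs 1 hd0
        rw [h, map_zero] at h7
        rcases mul_eq_zero.1 h7.symm with h8 | h8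
        · exact hε0 h8
        · exact hc1 h8
      have hge : d - 1 ≤ R.natDegree := le_natDegree_of_ne_zero hne
      omega
    have h0mem : (0:ℂ) ∈ s := (hmem_s 0).2 h0root
    have hZ : t.filter (fun α => α = 0) = {0} := by
      ext α
      simp only [ht, Finset.mem_filter, Finset.mem_singleton]
      constructor
      · rintro ⟨_, h⟩; exact h
      · rintro rfl
        refine ⟨⟨h0mem, ?_⟩, rfl⟩
        simp
    have hcount : s.card = 1 + (1 + (k + k)) := by
      rw [← hsplitA, hsC, ← hsplitB, hZ, hk]
      simp
    rw [hscard, hdeg1] at hcount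
    refine ⟨k + 1, by omega⟩
  · -- coeff at d nonzero : natDegree R = d and 0 is not a root
    have hdeg : R.natDegree = d := le_antisymm hRd (le_natDegree_of_ne_zero hcd)
    have hc00 : R.coeff 0 ≠ 0 := by
      intro h
      rw [h, mul_zero, map_eq_zero_iff _ (RingHom.injective _)] at hc0d
      exact hcd hc0d
    have h0nm : (0:ℂ) ∉ s := by
      rw [hmem_s, ← coeff_zero_eq_eval_zero]
      exact hc00
    have hZ : t.filter (fun α => α = 0) = ∅ := by
      ext α
      simp only [ht, Finset.mem_filter, Finset.notMem_empty, iff_false]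
      rintro ⟨⟨has, _⟩, rfl⟩
      exact h0nm has
    have hcount : s.card = 1 + (0 + (k + k)) := by
      rw [← hsplitA, hsC, ← hsplitB, hZ, hk]
      simp
    rw [hscard, hdeg] at hcount
    refine ⟨k, by omega⟩
end
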